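/- arXiv:2501.17385 — 3 statements merged into one kernel-verified Lean document; each statement's English description precedes it below -/
import Mathlib

section
/- Suppose f_j(1) > 0 for every j ∈ {1,…,k}. Then PoA(f,w,𝓒,𝓝) = 1/W°, where W° is the supremum, over all games G ∈ 𝓖, all pure Nash equilibria a of G satisfying W(a) = 1, and all action profiles b of G, of the value W(b). -/
open Finset

noncomputable section

/-- A resource allocation game with `n` agents: resources `Fin m`, nonnegative
resource values `v`, and nonempty finite action sets consisting of subsets of resources. -/
structure RAGame (n : ℕ) where
  m : ℕ
  v : Fin m → ℝ
  v_nonneg : ∀ r, 0 ≤ v r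
  act : Fin n → Finset (Finset (Fin m))
  act_nonempty : ∀ i, (act i).Nonempty

namespace RAGame

variable {n : ℕ}

/-- the number of agents in `S` selecting resource `r` at profile `a` -/
def cnt (G : RAGame n) (a : Fin n → Finset (Fin G.m)) (S : Finset (Fin n)) (r : Fin G.m) : ℕ :=
  (S.filter fun i => r ∈ a i).card

/-- `a` is an action profile of the game -/
def IsProfile (G : RAGame n) (a : Fin n → Finset (Fin G.m)) : Prop := ∀ i, a i ∈ G.act i

/-- the welfare `W(a) = ∑ r, v r * w (|a|_r)` -/
def welf (G : RAGame n) (w : ℕ → ℝ) (a : Fin n → Finset (Fin G.m)) : ℝ :=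
  ∑ r, G.v r * w (G.cnt a Finset.univ r)

end RAGame

/-- a basis function: `w 0 = 0` and `w j > 0` for `1 ≤ j ≤ n` -/
def IsBasis (n : ℕ) (w : ℕ → ℝ) : Prop :=
  w 0 = 0 ∧ ∀ j, 1 ≤ j → j ≤ n → 0 < w j

/-- An information network on `n` agents partitioned into `k` (nonempty) classes, namely
the fibers of `cls` (`cls` surjective says every class is nonempty), where each agent of
class `j` observes exactly the agents in `Nb j`;  `Nb j` contains the class `j` itself
and is a union of classes. -/
structure Network (n k : ℕ) where
  cls : Fin n → Fin k
  Nb : Fin k → Finset (Fin n)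
  cls_surj : Function.Surjective cls
  mem_Nb : ∀ i, i ∈ Nb (cls i)
  Nb_union : ∀ (j : Fin k) (i i' : Fin n), cls i = cls i' → i ∈ Nb j → i' ∈ Nb j

namespace Network

variable {n k : ℕ}

/-- the class `𝓒_j` as a finset of agents -/
def classSet (net : Network n k) (j : Fin k) : Finset (Fin n) :=
  Finset.univ.filter fun i => net.cls i = j

/-- `κ j = |𝓒_j|` -/
def κ (net : Network n k) (j : Fin k) : ℕ := (net.classSet j).card

end Network

/-- `f` is a utility mechanism for the network: `f_j 0 = f_j (|𝓝_j|+1) = 0` -/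
def IsMech {n k : ℕ} (net : Network n k) (f : Fin k → ℕ → ℝ) : Prop :=
  ∀ j, f j 0 = 0 ∧ f j ((net.Nb j).card + 1) = 0

namespace RAGame

variable {n k : ℕ}

/-- the utility `U_i(a) = ∑_{r ∈ a i} v r * f_{cls i} (|a|_r^{𝓝_{cls i}})` -/
def util (G : RAGame n) (net : Network n k) (f : Fin k → ℕ → ℝ)
    (a : Fin n → Finset (Fin G.m)) (i : Fin n) : ℝ :=
  ∑ r ∈ a i, G.v r * f (net.cls i) (G.cnt a (net.Nb (net.cls i)) r)

/-- `a` is a pure Nash equilibrium -/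
def IsNash (G : RAGame n) (net : Network n k) (f : Fin k → ℕ → ℝ)
    (a : Fin n → Finset (Fin G.m)) : Prop :=
  G.IsProfile a ∧ ∀ (i : Fin n), ∀ b ∈ G.act i,
    G.util net f (Function.update a i b) i ≤ G.util net f a i

end RAGame

/-- the defining condition of the class `𝓖`: some profile has positive welfare -/
def GoodGame {n : ℕ} (G : RAGame n) (w : ℕ → ℝ) : Prop :=
  ∃ a, G.IsProfile a ∧ 0 < G.welf w a

/-- (worst pure-equilibrium welfare) / (best welfare) of a single game -/
def gameRatio {n k : ℕ} (G : RAGame n) (w : ℕ → ℝ) (net : Network n k)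
    (f : Fin k → ℕ → ℝ) : ℝ :=
  sInf {x | ∃ a, G.IsNash net f a ∧ x = G.welf w a} /
    sSup {x | ∃ a, G.IsProfile a ∧ x = G.welf w a}

/-- the price of anarchy `PoA(f, w, 𝓒, 𝓝)` -/
def PoA (n : ℕ) {k : ℕ} (w : ℕ → ℝ) (net : Network n k) (f : Fin k → ℕ → ℝ) : ℝ :=
  sInf {q | ∃ G : RAGame n, GoodGame G w ∧ (∃ a, G.IsNash net f a) ∧
    q = gameRatio G w net f}

/-- index tuples `t = ((a_j, x_j, b_j))_{j ∈ [k]}` (components of size at most `n`) -/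
abbrev Idx (n k : ℕ) := Fin k → Fin (n + 1) × Fin (n + 1) × Fin (n + 1)

section IdxDefs

variable {n k : ℕ}

def aI (t : Idx n k) (j : Fin k) : ℕ := ((t j).1 : ℕ)
def xI (t : Idx n k) (j : Fin k) : ℕ := ((t j).2.1 : ℕ)
def bI (t : Idx n k) (j : Fin k) : ℕ := ((t j).2.2 : ℕ)

/-- `A_t = ∑_j (a_j + x_j)` -/
def AtI (t : Idx n k) : ℕ := ∑ j, (aI t j + xI t j)

/-- `B_t = ∑_j (b_j + x_j)` -/
def BtI (t : Idx n k) : ℕ := ∑ j, (bI t j + xI t j)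

/-- `A_{t,j} = ∑_{l : 𝓒_l ⊆ 𝓝_j} (a_l + x_l)` -/
def Atj (net : Network n k) (t : Idx n k) (j : Fin k) : ℕ :=
  ∑ l ∈ Finset.univ.filter (fun l => net.classSet l ⊆ net.Nb j), (aI t l + xI t l)

end IdxDefs

/-- the index set `𝓘` -/
def Iset (n k : ℕ) (κ : Fin k → ℕ) : Finset (Idx n k) :=
  Finset.univ.filter fun t =>
    (∀ j, aI t j + xI t j + bI t j ≤ κ j) ∧
    1 ≤ ∑ j, (aI t j + xI t j + bI t j) ∧
    ∑ j, (aI t j + xI t j + bI t j) ≤ n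

/-- the reduced index set `𝓘_R` -/
def IRset (n k : ℕ) (κ : Fin k → ℕ) : Finset (Idx n k) :=
  (Iset n k κ).filter fun t =>
    ∀ j, aI t j * xI t j * bI t j = 0 ∨ aI t j + xI t j + bI t j = κ j

section LP

variable {n k : ℕ}

/-- the primal LP objective `∑_{t ∈ 𝓘} w(B_t) θ(t)` for `θ : 𝓘 → ℝ` -/
def primalObj (n k : ℕ) (κ : Fin k → ℕ) (w : ℕ → ℝ)
    (θ : {t : Idx n k // t ∈ Iset n k κ} → ℝ) : ℝ :=
  ∑ t ∈ (Iset n k κ).attach, w (BtI t.1) * θ t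

/-- feasibility for the primal LP -/
def PrimalFeasible (n k : ℕ) (net : Network n k) (w : ℕ → ℝ) (f : Fin k → ℕ → ℝ)
    (θ : {t : Idx n k // t ∈ Iset n k net.κ} → ℝ) : Prop :=
  (∀ t, 0 ≤ θ t) ∧
  (∀ j : Fin k, 0 ≤ ∑ t ∈ (Iset n k net.κ).attach,
      ((aI t.1 j : ℝ) * f j (Atj net t.1 j) - (bI t.1 j : ℝ) * f j (Atj net t.1 j + 1)) * θ t) ∧
  ∑ t ∈ (Iset n k net.κ).attach, w (AtI t.1) * θ t = 1

/-- the set of primal objective values at feasible points; `W* = sSup` of this set -/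
def PrimalVals (n k : ℕ) (net : Network n k) (w : ℕ → ℝ) (f : Fin k → ℕ → ℝ) : Set ℝ :=
  {x | ∃ θ, PrimalFeasible n k net w f θ ∧ x = primalObj n k net.κ w θ}

/-- the dual LP constraint associated to index `t` -/
def DualConstr (net : Network n k) (w : ℕ → ℝ) (f : Fin k → ℕ → ℝ)
    (lam : Fin k → ℝ) (μ : ℝ) (t : Idx n k) : Prop :=
  w (BtI t) +
      ∑ j, lam j * ((aI t j : ℝ) * f j (Atj net t j) - (bI t j : ℝ) * f j (Atj net t j + 1))
    ≤ μ * w (AtI t)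

/-- the set of dual-feasible values `μ`; `V* = sInf` of this set -/
def DualSet (n k : ℕ) (net : Network n k) (w : ℕ → ℝ) (f : Fin k → ℕ → ℝ) : Set ℝ :=
  {μ | ∃ lam : Fin k → ℝ, (∀ j, 0 ≤ lam j) ∧ ∀ t ∈ IRset n k net.κ, DualConstr net w f lam μ t}

/-- feasibility for the LP deriving the optimal mechanism (`λ` folded into `f`) -/
def DesignFeas (n k : ℕ) (net : Network n k) (w : ℕ → ℝ) (f : Fin k → ℕ → ℝ) (μ : ℝ) : Prop :=
  IsMech net f ∧ ∀ t ∈ IRset n k net.κ,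
    w (BtI t) + ∑ j, ((aI t j : ℝ) * f j (Atj net t j) - (bI t j : ℝ) * f j (Atj net t j + 1))
      ≤ μ * w (AtI t)

end LP

section Theta

variable {n k : ℕ}

/-- `𝓡(t)`: the resources whose selection signature at `(a^ne, a^opt)` is `t` -/
def Rt (G : RAGame n) (net : Network n k) (ane aopt : Fin n → Finset (Fin G.m))
    (t : Idx n k) : Finset (Fin G.m) :=
  Finset.univ.filter fun r =>
    ∀ j : Fin k,
      G.cnt ane (net.classSet j) r = aI t j + xI t j ∧
      G.cnt aopt (net.classSet j) r = bI t j + xI t j ∧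
      ((net.classSet j).filter fun i => r ∈ ane i ∧ r ∈ aopt i).card = xI t j

/-- `θ(t) = ∑_{r ∈ 𝓡(t)} v r` -/
def θof (G : RAGame n) (net : Network n k) (ane aopt : Fin n → Finset (Fin G.m))
    (t : Idx n k) : ℝ :=
  ∑ r ∈ Rt G net ane aopt t, G.v r

end Theta

section Blind

variable {n : ℕ}

/-- utility in the blind network: blind agents (members of `B`) observe only themselves -/
def blindUtil (G : RAGame n) (B : Finset (Fin n)) (fbl : ℝ) (fnbl : ℕ → ℝ)
    (a : Fin n → Finset (Fin G.m)) (i : Fin n) : ℝ :=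
  if i ∈ B then ∑ r ∈ a i, G.v r * fbl
  else ∑ r ∈ a i, G.v r * fnbl (G.cnt a Finset.univ r)

/-- pure Nash equilibrium in the blind network -/
def IsBlindNash (G : RAGame n) (B : Finset (Fin n)) (fbl : ℝ) (fnbl : ℕ → ℝ)
    (a : Fin n → Finset (Fin G.m)) : Prop :=
  G.IsProfile a ∧ ∀ (i : Fin n), ∀ b ∈ G.act i,
    blindUtil G B fbl fnbl (Function.update a i b) i ≤ blindUtil G B fbl fnbl a i

/-- the price of anarchy for the blind network with blind agents `B` -/
def blindPoA (n : ℕ) (w : ℕ → ℝ) (B : Finset (Fin n)) (fbl : ℝ) (fnbl : ℕ → ℝ) : ℝ :=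
  sInf {q | ∃ G : RAGame n, GoodGame G w ∧ (∃ a, IsBlindNash G B fbl fnbl a) ∧
    q = sInf {x | ∃ a, IsBlindNash G B fbl fnbl a ∧ x = G.welf w a} /
        sSup {x | ∃ a, G.IsProfile a ∧ x = G.welf w a}}

/-- a triple `(a, x, b)` with entries of size at most `n` -/
abbrev Trip (n : ℕ) := Fin (n + 1) × Fin (n + 1) × Fin (n + 1)

def ta1 (t : Trip n × Trip n) : ℕ := (t.1.1 : ℕ)
def tx1 (t : Trip n × Trip n) : ℕ := (t.1.2.1 : ℕ)
def tb1 (t : Trip n × Trip n) : ℕ := (t.1.2.2 : ℕ)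
def ta2 (t : Trip n × Trip n) : ℕ := (t.2.1 : ℕ)
def tx2 (t : Trip n × Trip n) : ℕ := (t.2.2.1 : ℕ)
def tb2 (t : Trip n × Trip n) : ℕ := (t.2.2.2 : ℕ)

/-- `A_t` for the two-class (blind) network; also equals `A_{t,2}` -/
def At2 (t : Trip n × Trip n) : ℕ := ta1 t + tx1 t + ta2 t + tx2 t

/-- `B_t` for the two-class (blind) network -/
def Bt2 (t : Trip n × Trip n) : ℕ := tb1 t + tx1 t + tb2 t + tx2 t

end Blind

/-- the index set `𝓘` for the two-class (blind) network with `κ` blind agents -/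
def I2 (n κ : ℕ) : Finset (Trip n × Trip n) :=
  Finset.univ.filter fun t =>
    ta1 t + tx1 t + tb1 t ≤ κ ∧ ta2 t + tx2 t + tb2 t ≤ n - κ ∧
    1 ≤ ta1 t + tx1 t + tb1 t + (ta2 t + tx2 t + tb2 t) ∧
    ta1 t + tx1 t + tb1 t + (ta2 t + tx2 t + tb2 t) ≤ n

/-- the reduced index set `𝓘_R` for the two-class (blind) network -/
def IR2 (n κ : ℕ) : Finset (Trip n × Trip n) :=
  (I2 n κ).filter fun t =>
    (ta1 t * tx1 t * tb1 t = 0 ∨ ta1 t + tx1 t + tb1 t = κ) ∧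
    (ta2 t * tx2 t * tb2 t = 0 ∨ ta2 t + tx2 t + tb2 t = n - κ)

section BlindLP

variable {n : ℕ}

/-- the dual LP constraint for the blind network at index `t` -/
def BlindDualConstr (w : ℕ → ℝ) (fnbl : ℕ → ℝ) (l1 l2 μ : ℝ) (t : Trip n × Trip n) : Prop :=
  w (Bt2 t) + l1 * ((ta1 t : ℝ) - (tb1 t : ℝ)) +
      l2 * ((ta2 t : ℝ) * fnbl (At2 t) - (tb2 t : ℝ) * fnbl (At2 t + 1))
    ≤ μ * w (At2 t)

/-- the set of dual-feasible values `μ` for the blind network; `V* = sInf` of this set -/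
def BlindDualSet (n κ : ℕ) (w : ℕ → ℝ) (fnbl : ℕ → ℝ) : Set ℝ :=
  {μ | ∃ l1 l2 : ℝ, 0 ≤ l1 ∧ 0 ≤ l2 ∧ ∀ t ∈ IR2 n κ, BlindDualConstr w fnbl l1 l2 μ t}

/-- feasibility for the optimal-design LP of the blind network -/
def BlindDesignFeas (n κ : ℕ) (w : ℕ → ℝ) (fnbl : ℕ → ℝ) (μ : ℝ) : Prop :=
  fnbl 0 = 0 ∧ fnbl (n + 1) = 0 ∧ ∃ l : ℝ, 0 ≤ l ∧ ∀ t ∈ IR2 n κ,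
    w (Bt2 t) + l * ((ta1 t : ℝ) - (tb1 t : ℝ)) + (ta2 t : ℝ) * fnbl (At2 t)
      - (tb2 t : ℝ) * fnbl (At2 t + 1) ≤ μ * w (At2 t)

/-- `𝓡(t)` for the two-class blind network with blind agents `B` -/
def Rt2 (G : RAGame n) (B : Finset (Fin n)) (ane aopt : Fin n → Finset (Fin G.m))
    (t : Trip n × Trip n) : Finset (Fin G.m) :=
  Finset.univ.filter fun r =>
    G.cnt ane B r = ta1 t + tx1 t ∧ G.cnt aopt B r = tb1 t + tx1 t ∧
    (B.filter fun i => r ∈ ane i ∧ r ∈ aopt i).card = tx1 t ∧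
    G.cnt ane Bᶜ r = ta2 t + tx2 t ∧ G.cnt aopt Bᶜ r = tb2 t + tx2 t ∧
    (Bᶜ.filter fun i => r ∈ ane i ∧ r ∈ aopt i).card = tx2 t

/-- `θ(t)` for the two-class blind network -/
def θof2 (G : RAGame n) (B : Finset (Fin n)) (ane aopt : Fin n → Finset (Fin G.m))
    (t : Trip n × Trip n) : ℝ :=
  ∑ r ∈ Rt2 G B ane aopt t, G.v r

end BlindLP

/-- the potential function `G_j(a) = ∑_r v_r ∑_{l=1}^{|a|_r^{𝓝_j}} f_j(l)` -/
def potentialG {n k : ℕ} (G : RAGame n) (net : Network n k) (f : Fin k → ℕ → ℝ)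
    (j : Fin k) (a : Fin n → Finset (Fin G.m)) : ℝ :=
  ∑ r, G.v r * ∑ l ∈ Finset.Icc 1 (G.cnt a (net.Nb j) r), f j l

/-- the potential `G_1(a) = ∑_r v_r |a|_r^{bl}` for the class of blind agents `B` -/
def blindPotential {n : ℕ} (G : RAGame n) (B : Finset (Fin n))
    (a : Fin n → Finset (Fin G.m)) : ℝ :=
  ∑ r, G.v r * (G.cnt a B r : ℝ)

/-- the game with every resource value scaled by `c ≥ 0` -/
def RAGame.scale {n : ℕ} (G : RAGame n) (c : ℝ) (hc : 0 ≤ c) : RAGame n :=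
  ⟨G.m, fun r => c * G.v r, fun r => mul_nonneg hc (G.v_nonneg r), G.act, G.act_nonempty⟩

/-- the game with the same resources but the action set of each agent `i`
restricted to `{a i, b i}` -/
def RAGame.restrictTwo {n : ℕ} (G : RAGame n) (a b : Fin n → Finset (Fin G.m)) : RAGame n :=
  ⟨G.m, G.v, G.v_nonneg, fun i => {a i, b i}, fun i => ⟨a i, by simp⟩⟩

end

section Aux

open RAGame Finset

variable {n k : ℕ}

lemma cnt_le_n (G : RAGame n) (a : Fin n → Finset (Fin G.m)) (S : Finset (Fin n))
    (r : Fin G.m) : G.cnt a S r ≤ n := by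
  calc (S.filter fun i => r ∈ a i).card ≤ S.card := Finset.card_filter_le _ _
    _ ≤ (Finset.univ : Finset (Fin n)).card := Finset.card_le_card (Finset.subset_univ _)
    _ = n := by simp

lemma w_cnt_nonneg {w : ℕ → ℝ} (hw : IsBasis n w) {c : ℕ} (hc : c ≤ n) : 0 ≤ w c := by
  rcases Nat.eq_zero_or_pos c with h | h
  · simp [h, hw.1]
  · exact (hw.2 c h hc).le

lemma welf_nonneg {w : ℕ → ℝ} (hw : IsBasis n w) (G : RAGame n)
    (a : Fin n → Finset (Fin G.m)) : 0 ≤ G.welf w a :=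
  Finset.sum_nonneg fun r _ =>
    mul_nonneg (G.v_nonneg r) (w_cnt_nonneg hw (cnt_le_n G a _ r))

lemma cnt_univ_eq_zero {G : RAGame n} {a : Fin n → Finset (Fin G.m)} {r : Fin G.m} :
    G.cnt a Finset.univ r = 0 ↔ ∀ i, r ∉ a i := by
  simp [RAGame.cnt, Finset.filter_eq_empty_iff]

lemma cnt_update_eq_one {G : RAGame n} {a : Fin n → Finset (Fin G.m)} {r : Fin G.m}
    (h : ∀ i', r ∉ a i') {S : Finset (Fin n)} {i : Fin n} (hi : i ∈ S)
    {c : Finset (Fin G.m)} (hc : r ∈ c) :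
    G.cnt (Function.update a i c) S r = 1 := by
  have hset : (S.filter fun i' => r ∈ Function.update a i c i') = {i} := by
    ext i'
    simp only [Finset.mem_filter, Finset.mem_singleton]
    constructor
    · rintro ⟨-, h2⟩
      by_contra hne
      rw [Function.update_of_ne hne] at h2
      exact h i' h2
    · rintro rfl
      simpa [Function.update_self] using ⟨hi, hc⟩
  simp [RAGame.cnt, hset]

/-- In a good game, every pure Nash equilibrium has positive welfare. -/
lemma nash_welf_pos {w : ℕ → ℝ} (hw : IsBasis n w) {G : RAGame n} (hG : GoodGame G w)
    {net : Network n k} {f : Fin k → ℕ → ℝ} (hfpos : ∀ j, 0 < f j 1)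
    {a : Fin n → Finset (Fin G.m)} (ha : G.IsNash net f a) : 0 < G.welf w a := by
  rcases lt_or_ge 0 (G.welf w a) with h | h
  · exact h
  exfalso
  have hzero : G.welf w a = 0 := le_antisymm h (welf_nonneg hw G a)
  have hterm : ∀ r ∈ (Finset.univ : Finset (Fin G.m)),
      G.v r * w (G.cnt a Finset.univ r) = 0 := by
    rw [← Finset.sum_eq_zero_iff_of_nonneg]
    · exact hzero
    · exact fun r _ => mul_nonneg (G.v_nonneg r) (w_cnt_nonneg hw (cnt_le_n G a _ r))
  have hz : ∀ r, 0 < G.v r → G.cnt a Finset.univ r = 0 := by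
    intro r hv
    by_contra hc
    have h1 : 1 ≤ G.cnt a Finset.univ r := Nat.one_le_iff_ne_zero.mpr hc
    have := hterm r (Finset.mem_univ r)
    have hwpos := hw.2 _ h1 (cnt_le_n G a _ r)
    nlinarith
  obtain ⟨p, hp, hpw⟩ := hG
  have : ∑ _r : Fin G.m, (0:ℝ) < ∑ r, G.v r * w (G.cnt p Finset.univ r) := by
    simpa [RAGame.welf] using hpw
  obtain ⟨r, -, hr⟩ := Finset.exists_lt_of_sum_lt this
  have hvr : 0 < G.v r := by
    rcases (G.v_nonneg r).lt_or_eq with h' | h'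
    · exact h'
    · rw [← h'] at hr; simp at hr
  have hcntp : 0 < G.cnt p Finset.univ r := by
    by_contra hcp
    have : G.cnt p Finset.univ r = 0 := Nat.eq_zero_of_not_pos hcp
    rw [this, hw.1] at hr; simp at hr
  obtain ⟨i, hi⟩ : ∃ i, r ∈ p i := by
    obtain ⟨i, hi⟩ := Finset.card_pos.mp hcntp
    exact ⟨i, (Finset.mem_filter.mp hi).2⟩
  -- utility of i at a is 0
  have hUa : G.util net f a i = 0 := by
    apply Finset.sum_eq_zero
    intro r' hr'
    have hne : G.cnt a Finset.univ r' ≠ 0 := fun hc => (cnt_univ_eq_zero.mp hc) i hr'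
    have hv0 : G.v r' = 0 := by
      by_contra hv
      exact hne (hz r' ((G.v_nonneg r').lt_of_ne (Ne.symm hv)))
    simp [hv0]
  -- utility of i deviating to p i is positive
  have hUd : 0 < G.util net f (Function.update a i (p i)) i := by
    rw [RAGame.util]
    apply Finset.sum_pos'
    · intro r' hr'
      simp only [Function.update_self] at hr'
      rcases (G.v_nonneg r').lt_or_eq with hv | hv
      · have h0 : G.cnt a Finset.univ r' = 0 := hz r' hv
        rw [cnt_update_eq_one (cnt_univ_eq_zero.mp h0) (net.mem_Nb i) hr']
        exact (mul_pos hv (hfpos _)).le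
      · simp [← hv]
    · refine ⟨r, by simpa using hi, ?_⟩
      have h0 : G.cnt a Finset.univ r = 0 := hz r hvr
      rw [cnt_update_eq_one (cnt_univ_eq_zero.mp h0) (net.mem_Nb i) hi]
      exact mul_pos hvr (hfpos _)
  have := ha.2 i (p i) (hp i)
  rw [hUa] at this
  exact absurd (lt_of_lt_of_le hUd this) (lt_irrefl 0)

end Aux
section Aux2

open RAGame Finset

variable {n k : ℕ}

lemma scale_welf (G : RAGame n) {c : ℝ} (hc : 0 ≤ c) (w : ℕ → ℝ)
    (a : Fin n → Finset (Fin G.m)) :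
    (G.scale c hc).welf w a = c * G.welf w a := by
  simp [RAGame.welf, RAGame.scale, RAGame.cnt, Finset.mul_sum, mul_assoc]
  rfl

lemma scale_util (G : RAGame n) {c : ℝ} (hc : 0 ≤ c) (net : Network n k)
    (f : Fin k → ℕ → ℝ) (a : Fin n → Finset (Fin G.m)) (i : Fin n) :
    (G.scale c hc).util net f a i = c * G.util net f a i := by
  simp [RAGame.util, RAGame.scale, RAGame.cnt, Finset.mul_sum, mul_assoc]
  rfl

lemma scale_nash (G : RAGame n) {c : ℝ} (hc : 0 ≤ c) (net : Network n k)
    (f : Fin k → ℕ → ℝ) {a : Fin n → Finset (Fin G.m)} (ha : G.IsNash net f a) :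
    (G.scale c hc).IsNash net f a := by
  refine ⟨ha.1, fun i b hb => ?_⟩
  rw [scale_util]
  exact (scale_util G hc net f (Function.update a i b) i).trans_le
    (mul_le_mul_of_nonneg_left (ha.2 i b hb) hc)

lemma vals_finite (G : RAGame n) (P : (Fin n → Finset (Fin G.m)) → Prop)
    (g : (Fin n → Finset (Fin G.m)) → ℝ) : {x | ∃ a, P a ∧ x = g a}.Finite := by
  have hsub : {x | ∃ a, P a ∧ x = g a} ⊆ Set.range g := by
    rintro x ⟨a, -, rfl⟩; exact ⟨a, rfl⟩
  exact (Set.finite_range g).subset hsub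

/-- Key bound: in any game, the welfare of any profile is at most a constant
(depending only on `n, w, net, f`) times the welfare of any pure Nash equilibrium. -/
lemma welf_le_mul_welf {w : ℕ → ℝ} (hw : IsBasis n w) (hn : 0 < n)
    (net : Network n k) (f : Fin k → ℕ → ℝ) (hfpos : ∀ j, 0 < f j 1) :
    ∃ C : ℝ, 0 < C ∧ ∀ (G : RAGame n) (a b : Fin n → Finset (Fin G.m)),
      G.IsNash net f a → G.IsProfile b → G.welf w b ≤ C * G.welf w a := by
  classical
  have hk : Nonempty (Fin k) := ⟨net.cls ⟨0, hn⟩⟩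
  -- constants
  set F : ℝ := ∑ j : Fin k, ∑ l ∈ Finset.range (n + 1), |f j l| with hFdef
  have hF0 : 0 ≤ F := Finset.sum_nonneg fun j _ =>
    Finset.sum_nonneg fun l _ => abs_nonneg _
  have hF : ∀ (j : Fin k) (l : ℕ), l ≤ n → |f j l| ≤ F := by
    intro j l hl
    calc |f j l| ≤ ∑ l' ∈ Finset.range (n + 1), |f j l'| :=
          Finset.single_le_sum (f := fun l' => |f j l'|) (fun l' _ => abs_nonneg _)
            (Finset.mem_range.mpr (Nat.lt_succ_of_le hl))
      _ ≤ F := Finset.single_le_sum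
            (fun j' (_ : j' ∈ Finset.univ) =>
              Finset.sum_nonneg fun l' _ => abs_nonneg (f j' l'))
            (Finset.mem_univ j)
  set wmax : ℝ := ∑ l ∈ Finset.range (n + 1), |w l| with hwmaxdef
  have hwmax : ∀ l ≤ n, w l ≤ wmax := fun l hl =>
    (le_abs_self _).trans <| Finset.single_le_sum (f := fun l' => |w l'|)
      (fun l' _ => abs_nonneg _) (Finset.mem_range.mpr (Nat.lt_succ_of_le hl))
  have hwmax0 : 0 < wmax := lt_of_lt_of_le (hw.2 1 le_rfl hn) (hwmax 1 hn)
  have hIcc : ((Finset.Icc 1 n).image w).Nonempty :=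
    (Finset.nonempty_Icc.mpr hn).image w
  set wmin : ℝ := ((Finset.Icc 1 n).image w).min' hIcc with hwmindef
  have hwmin0 : 0 < wmin := by
    obtain ⟨l, hl, hlw⟩ := Finset.mem_image.mp (Finset.min'_mem _ hIcc)
    rw [hwmindef, ← hlw]
    exact hw.2 l (Finset.mem_Icc.mp hl).1 (Finset.mem_Icc.mp hl).2
  have hwmin : ∀ l, 1 ≤ l → l ≤ n → wmin ≤ w l := fun l h1 h2 =>
    Finset.min'_le _ _ (Finset.mem_image_of_mem w (Finset.mem_Icc.mpr ⟨h1, h2⟩))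
  have hfim : ((Finset.univ : Finset (Fin k)).image fun j => f j 1).Nonempty :=
    Finset.univ_nonempty.image _
  set fmin : ℝ := ((Finset.univ : Finset (Fin k)).image fun j => f j 1).min' hfim
    with hfmindef
  have hfmin0 : 0 < fmin := by
    obtain ⟨j, -, hj⟩ := Finset.mem_image.mp (Finset.min'_mem _ hfim)
    rw [hfmindef, ← hj]; exact hfpos j
  have hfmin : ∀ j, fmin ≤ f j 1 := fun j =>
    Finset.min'_le _ _ (Finset.mem_image_of_mem _ (Finset.mem_univ j))
  refine ⟨wmax * (2 * n * F / fmin + 1) / wmin, ?_, ?_⟩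
  · apply div_pos _ hwmin0
    apply mul_pos hwmax0
    have : 0 ≤ 2 * (n : ℝ) * F / fmin :=
      div_nonneg (by positivity) hfmin0.le
    linarith
  intro G a b ha hb
  set selA : Finset (Fin G.m) :=
    Finset.univ.filter (fun r => 0 < G.cnt a Finset.univ r) with hselA
  set Vsel : ℝ := ∑ r ∈ selA, G.v r with hVsel
  have hVsel0 : 0 ≤ Vsel := Finset.sum_nonneg fun r _ => G.v_nonneg r
  -- Step F : wmin * Vsel ≤ welf a
  have stepF : wmin * Vsel ≤ G.welf w a := by
    rw [hVsel, Finset.mul_sum]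
    calc ∑ r ∈ selA, wmin * G.v r ≤ ∑ r ∈ selA, G.v r * w (G.cnt a Finset.univ r) := by
          apply Finset.sum_le_sum
          intro r hr
          rw [mul_comm]
          apply mul_le_mul_of_nonneg_left _ (G.v_nonneg r)
          exact hwmin _ (Finset.mem_filter.mp hr).2 (cnt_le_n G a _ r)
      _ ≤ ∑ r, G.v r * w (G.cnt a Finset.univ r) := by
          apply Finset.sum_le_sum_of_subset_of_nonneg (Finset.filter_subset _ _)
          intro r _ _
          exact mul_nonneg (G.v_nonneg r) (w_cnt_nonneg hw (cnt_le_n G a _ r))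
      _ = G.welf w a := rfl
  -- subset facts
  have hsubA : ∀ i, a i ⊆ selA := by
    intro i r hr
    refine Finset.mem_filter.mpr ⟨Finset.mem_univ r, Finset.card_pos.mpr ⟨i, ?_⟩⟩
    exact Finset.mem_filter.mpr ⟨Finset.mem_univ i, hr⟩
  -- Step B : U_i(a) ≤ F * Vsel
  have stepB : ∀ i, G.util net f a i ≤ F * Vsel := by
    intro i
    calc G.util net f a i ≤ ∑ r ∈ a i, G.v r * F := by
          apply Finset.sum_le_sum
          intro r hr
          exact mul_le_mul_of_nonneg_left
            ((le_abs_self _).trans (hF _ _ (cnt_le_n G a _ r))) (G.v_nonneg r)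
      _ = F * ∑ r ∈ a i, G.v r := by rw [← Finset.sum_mul, mul_comm]
      _ ≤ F * Vsel := by
          apply mul_le_mul_of_nonneg_left _ hF0
          exact Finset.sum_le_sum_of_subset_of_nonneg (hsubA i)
            (fun r _ _ => G.v_nonneg r)
  -- Step C : lower bound for the deviation utility
  have stepC : ∀ i, fmin * (∑ r ∈ (b i) \ selA, G.v r) - F * Vsel ≤
      G.util net f (Function.update a i (b i)) i := by
    intro i
    have hsplit : G.util net f (Function.update a i (b i)) i =
        (∑ r ∈ (b i) ∩ selA, G.v r *
            f (net.cls i) (G.cnt (Function.update a i (b i)) (net.Nb (net.cls i)) r)) +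
        ∑ r ∈ (b i) \ selA, G.v r *
            f (net.cls i) (G.cnt (Function.update a i (b i)) (net.Nb (net.cls i)) r) := by
      rw [RAGame.util]
      rw [Function.update_self]
      exact (Finset.sum_inter_add_sum_sdiff _ _ _).symm
    rw [hsplit]
    have h1 : -(F * Vsel) ≤ ∑ r ∈ (b i) ∩ selA, G.v r *
        f (net.cls i) (G.cnt (Function.update a i (b i)) (net.Nb (net.cls i)) r) := by
      calc -(F * Vsel) = -(F * Vsel) := rfl
        _ ≤ -(F * ∑ r ∈ (b i) ∩ selA, G.v r) := by
            apply neg_le_neg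
            apply mul_le_mul_of_nonneg_left _ hF0
            exact Finset.sum_le_sum_of_subset_of_nonneg
              (Finset.inter_subset_right) (fun r _ _ => G.v_nonneg r)
        _ = ∑ r ∈ (b i) ∩ selA, -(F * G.v r) := by rw [Finset.mul_sum, ← Finset.sum_neg_distrib]
        _ ≤ _ := by
            apply Finset.sum_le_sum
            intro r hr
            have habs : |f (net.cls i) (G.cnt (Function.update a i (b i))
                (net.Nb (net.cls i)) r)| ≤ F := hF _ _ (cnt_le_n G _ _ r)
            have := neg_abs_le (f (net.cls i) (G.cnt (Function.update a i (b i))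
                (net.Nb (net.cls i)) r))
            nlinarith [G.v_nonneg r]
    have h2 : fmin * (∑ r ∈ (b i) \ selA, G.v r) ≤ ∑ r ∈ (b i) \ selA, G.v r *
        f (net.cls i) (G.cnt (Function.update a i (b i)) (net.Nb (net.cls i)) r) := by
      rw [Finset.mul_sum]
      apply Finset.sum_le_sum
      intro r hr
      obtain ⟨hrb, hrA⟩ := Finset.mem_sdiff.mp hr
      have h0 : G.cnt a Finset.univ r = 0 := by
        by_contra hc
        exact hrA (Finset.mem_filter.mpr ⟨Finset.mem_univ r, Nat.pos_of_ne_zero hc⟩)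
      rw [cnt_update_eq_one (cnt_univ_eq_zero.mp h0) (net.mem_Nb i) hrb]
      rw [mul_comm]
      exact mul_le_mul_of_nonneg_left (hfmin _) (G.v_nonneg r)
    linarith
  -- Nash and sum over i
  have stepA : ∀ i, G.util net f (Function.update a i (b i)) i ≤ G.util net f a i :=
    fun i => ha.2 i (b i) (hb i)
  have key : ∀ i, fmin * (∑ r ∈ (b i) \ selA, G.v r) ≤ 2 * (F * Vsel) := by
    intro i
    have := (stepC i).trans ((stepA i).trans (stepB i))
    linarith
  set T : ℝ := ∑ i, ∑ r ∈ (b i) \ selA, G.v r with hT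
  have hT0 : 0 ≤ T := Finset.sum_nonneg fun i _ =>
    Finset.sum_nonneg fun r _ => G.v_nonneg r
  have hTle : fmin * T ≤ (n : ℝ) * (2 * (F * Vsel)) := by
    rw [hT, Finset.mul_sum]
    calc ∑ i, fmin * ∑ r ∈ (b i) \ selA, G.v r ≤ ∑ _i : Fin n, 2 * (F * Vsel) :=
          Finset.sum_le_sum fun i _ => key i
      _ = (n : ℝ) * (2 * (F * Vsel)) := by simp [Finset.sum_const, nsmul_eq_mul]
  -- Step D : ∑_{r ∈ selB \ selA} v r ≤ T
  set selB : Finset (Fin G.m) :=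
    Finset.univ.filter (fun r => 0 < G.cnt b Finset.univ r) with hselB
  have stepD : ∑ r ∈ selB \ selA, G.v r ≤ T := by
    have hTeq : T = ∑ r : Fin G.m, ∑ i, if r ∈ (b i) \ selA then G.v r else 0 := by
      rw [hT, Finset.sum_comm]
      congr 1
      ext i
      rw [Finset.sum_ite_mem, Finset.univ_inter]
    rw [hTeq]
    have : ∑ r ∈ selB \ selA, G.v r =
        ∑ r : Fin G.m, if r ∈ selB \ selA then G.v r else 0 := by
      rw [Finset.sum_ite_mem, Finset.univ_inter]
    rw [this]
    apply Finset.sum_le_sum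
    intro r _
    by_cases hrin : r ∈ selB \ selA
    · obtain ⟨hrB, hrA⟩ := Finset.mem_sdiff.mp hrin
      obtain ⟨i0, hi0⟩ := Finset.card_pos.mp (Finset.mem_filter.mp hrB).2
      have hi0' : r ∈ b i0 := (Finset.mem_filter.mp hi0).2
      rw [if_pos hrin]
      have hle := Finset.single_le_sum (f := fun i => if r ∈ (b i) \ selA then G.v r else 0)
        (fun i _ => by by_cases h : r ∈ (b i) \ selA <;> simp [h, G.v_nonneg r])
        (Finset.mem_univ i0)
      simpa [Finset.mem_sdiff.mpr ⟨hi0', hrA⟩] using hle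
    · rw [if_neg hrin]
      exact Finset.sum_nonneg fun i _ => by
        by_cases h : r ∈ (b i) \ selA <;> simp [h, G.v_nonneg r]
  -- Step E : welf b ≤ wmax * (T' + Vsel)
  have stepE : G.welf w b ≤ wmax * ((∑ r ∈ selB \ selA, G.v r) + Vsel) := by
    have e1 : (∑ r ∈ selB \ selA, G.v r) =
        ∑ r : Fin G.m, if r ∈ selB \ selA then G.v r else 0 := by
      rw [Finset.sum_ite_mem, Finset.univ_inter]
    have e2 : Vsel = ∑ r : Fin G.m, if r ∈ selA then G.v r else 0 := by
      rw [hVsel, Finset.sum_ite_mem, Finset.univ_inter]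
    rw [e1, e2, ← Finset.sum_add_distrib, Finset.mul_sum]
    show ∑ r, G.v r * w (G.cnt b Finset.univ r) ≤ _
    apply Finset.sum_le_sum
    intro r _
    have hwcnt : w (G.cnt b Finset.univ r) ≤ wmax := hwmax _ (cnt_le_n G b _ r)
    have hite1 : (0:ℝ) ≤ if r ∈ selB \ selA then G.v r else 0 := by
      by_cases h : r ∈ selB \ selA <;> simp [h, G.v_nonneg r]
    by_cases hA : r ∈ selA
    · rw [if_pos hA]
      have h3 : G.v r * w (G.cnt b Finset.univ r) ≤ wmax * G.v r := by
        rw [mul_comm wmax]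
        exact mul_le_mul_of_nonneg_left hwcnt (G.v_nonneg r)
      nlinarith [mul_nonneg hwmax0.le hite1]
    · by_cases hB : 0 < G.cnt b Finset.univ r
      · have hrB : r ∈ selB \ selA := Finset.mem_sdiff.mpr
          ⟨Finset.mem_filter.mpr ⟨Finset.mem_univ r, hB⟩, hA⟩
        rw [if_pos hrB, if_neg hA, add_zero, mul_comm wmax]
        exact mul_le_mul_of_nonneg_left hwcnt (G.v_nonneg r)
      · have h0 : G.cnt b Finset.univ r = 0 := Nat.eq_zero_of_not_pos hB
        rw [h0, hw.1, mul_zero, if_neg hA, add_zero]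
        exact mul_nonneg hwmax0.le hite1
  -- combine everything
  have hTle' : (∑ r ∈ selB \ selA, G.v r) ≤ 2 * n * F * Vsel / fmin := by
    rw [le_div_iff₀ hfmin0]
    calc (∑ r ∈ selB \ selA, G.v r) * fmin
        = fmin * (∑ r ∈ selB \ selA, G.v r) := mul_comm _ _
      _ ≤ fmin * T := mul_le_mul_of_nonneg_left stepD hfmin0.le
      _ ≤ (n : ℝ) * (2 * (F * Vsel)) := hTle
      _ = 2 * n * F * Vsel := by ring
  have hmain : G.welf w b ≤ wmax * (2 * n * F * Vsel / fmin + Vsel) := by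
    refine stepE.trans ?_
    apply mul_le_mul_of_nonneg_left _ hwmax0.le
    linarith
  have heq : wmax * (2 * n * F * Vsel / fmin + Vsel)
      = (wmax * (2 * n * F / fmin + 1)) * Vsel := by
    field_simp
  rw [heq] at hmain
  have hcoeff : 0 ≤ wmax * (2 * n * F / fmin + 1) := by
    have h1 : (0:ℝ) ≤ 2 * n * F / fmin := div_nonneg (by positivity) hfmin0.le
    nlinarith
  have hlast : (wmax * (2 * n * F / fmin + 1)) * Vsel
      ≤ (wmax * (2 * n * F / fmin + 1)) * (G.welf w a / wmin) := by
    apply mul_le_mul_of_nonneg_left _ hcoeff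
    rw [le_div_iff₀ hwmin0]
    linarith [stepF]
  have hfin : (wmax * (2 * n * F / fmin + 1)) * (G.welf w a / wmin)
      = wmax * (2 * n * F / fmin + 1) / wmin * G.welf w a := by
    ring
  linarith [hmain, hlast, hfin.le, hfin.ge]

end Aux2
section Aux3

open RAGame Finset

variable {n k : ℕ}

lemma singleton_nash {G : RAGame n} (net : Network n k) (f : Fin k → ℕ → ℝ)
    (a : Fin n → Finset (Fin G.m)) (h : ∀ i, G.act i = {a i}) : G.IsNash net f a := by
  refine ⟨fun i => by rw [h i]; exact Finset.mem_singleton_self _, fun i b hb => ?_⟩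
  rw [h i, Finset.mem_singleton] at hb
  subst hb
  rw [Function.update_eq_self]

/-- the trivial game: one resource of value 1, each agent must select it -/
def trivGame (n : ℕ) : RAGame n :=
  ⟨1, fun _ => 1, fun _ => zero_le_one, fun _ => {{0}},
    fun _ => ⟨{0}, Finset.mem_singleton_self _⟩⟩

lemma trivGame_nash (net : Network n k) (f : Fin k → ℕ → ℝ) :
    (trivGame n).IsNash net f (fun _ => ({0} : Finset (Fin 1))) :=
  singleton_nash net f _ (fun _ => rfl)

lemma trivGame_welf (w : ℕ → ℝ) :
    (trivGame n).welf w (fun _ => ({0} : Finset (Fin 1))) = w n := by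
  show ∑ r : Fin 1, (1 : ℝ) * w ((Finset.univ.filter
      fun i : Fin n => r ∈ ({0} : Finset (Fin 1))).card) = w n
  simp

end Aux3
/-- if `f_j(1) > 0` for all `j`, then `PoA = 1/W°`, where `W°` is the supremum
of `W(b)` over games in `𝓖`, pure Nash equilibria with `W = 1`, and profiles `b`. -/
theorem poa_eq_inv_sup_over_normalized_games {n k : ℕ} (w : ℕ → ℝ) (hw : IsBasis n w)
    (net : Network n k) (f : Fin k → ℕ → ℝ) (hf : IsMech net f)
    (hfpos : ∀ j, 0 < f j 1) :
    PoA n w net f = 1 / sSup {x | ∃ G : RAGame n, GoodGame G w ∧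
      ∃ a, G.IsNash net f a ∧ G.welf w a = 1 ∧
        ∃ b, G.IsProfile b ∧ x = G.welf w b} := by
  classical
  set S : Set ℝ := {x | ∃ G : RAGame n, GoodGame G w ∧
      ∃ a, G.IsNash net f a ∧ G.welf w a = 1 ∧
        ∃ b, G.IsProfile b ∧ x = G.welf w b} with hSdef
  set Q : Set ℝ := {q | ∃ G : RAGame n, GoodGame G w ∧ (∃ a, G.IsNash net f a) ∧
      q = gameRatio G w net f} with hQdef
  have hPoA : PoA n w net f = sInf Q := rfl
  rcases Nat.eq_zero_or_pos n with hn | hn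
  · -- degenerate case n = 0 : no good games at all
    have hwz : ∀ (G : RAGame n) (a : Fin n → Finset (Fin G.m)), G.welf w a = 0 := by
      intro G a
      apply Finset.sum_eq_zero
      intro r _
      have h0 : G.cnt a Finset.univ r = 0 :=
        Nat.le_zero.mp (hn ▸ cnt_le_n G a Finset.univ r)
      rw [h0, hw.1, mul_zero]
    have hnogood : ∀ G : RAGame n, ¬ GoodGame G w := by
      rintro G ⟨p, -, hpw⟩
      rw [hwz G p] at hpw
      exact lt_irrefl 0 hpw
    have hQe : Q = ∅ := by
      rw [hQdef]
      ext q
      simp only [Set.mem_setOf_eq, Set.mem_empty_iff_false, iff_false]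
      rintro ⟨G, hG, -⟩
      exact hnogood G hG
    have hSe : S = ∅ := by
      rw [hSdef]
      ext x
      simp only [Set.mem_setOf_eq, Set.mem_empty_iff_false, iff_false]
      rintro ⟨G, hG, -⟩
      exact hnogood G hG
    rw [hPoA, hQe, hSe, Real.sInf_empty, Real.sSup_empty]
    norm_num
  · -- main case n ≥ 1
    have hwn : 0 < w n := hw.2 n hn le_rfl
    have hgood0 : GoodGame (trivGame n) w :=
      ⟨_, (trivGame_nash net f).1, by rw [trivGame_welf]; exact hwn⟩
    have hq0 : gameRatio (trivGame n) w net f ∈ Q :=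
      ⟨trivGame n, hgood0, ⟨_, trivGame_nash net f⟩, rfl⟩
    -- 1 ∈ S via the scaled trivial game
    have hcw : (0:ℝ) ≤ 1 / w n := by positivity
    have h1welf : ((trivGame n).scale (1 / w n) hcw).welf w
        (fun _ => ({0} : Finset (Fin 1))) = 1 := by
      refine (scale_welf (trivGame n) hcw w _).trans ?_
      rw [trivGame_welf]
      field_simp
    have h1S : (1:ℝ) ∈ S := by
      refine ⟨(trivGame n).scale (1 / w n) hcw,
        ⟨_, (scale_nash _ hcw net f (trivGame_nash net f)).1, by rw [h1welf]; norm_num⟩,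
        _, scale_nash _ hcw net f (trivGame_nash net f), h1welf,
        _, (scale_nash _ hcw net f (trivGame_nash net f)).1, h1welf.symm⟩
    -- S is bounded above
    obtain ⟨C, hC0, hC⟩ := welf_le_mul_welf hw hn net f hfpos
    have hSbdd : BddAbove S := by
      refine ⟨C, fun x hx => ?_⟩
      obtain ⟨G, -, a, haN, haW, b, hbP, rfl⟩ := hx
      have := hC G a b haN hbP
      rwa [haW, mul_one] at this
    have hWpos : 0 < sSup S := lt_of_lt_of_le one_pos (le_csSup hSbdd h1S)
    -- Q is bounded below by 0
    have hQbdd : BddBelow Q := by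
      refine ⟨0, ?_⟩
      rintro q ⟨G', hG', ⟨a', ha'⟩, rfl⟩
      have hNfin := vals_finite G' (G'.IsNash net f) (G'.welf w)
      have hNne : {x | ∃ a, G'.IsNash net f a ∧ x = G'.welf w a}.Nonempty :=
        ⟨_, a', ha', rfl⟩
      obtain ⟨a2, -, ha2⟩ := Set.Nonempty.csInf_mem hNne hNfin
      have hPfin := vals_finite G' G'.IsProfile (G'.welf w)
      have hPne : {x | ∃ a, G'.IsProfile a ∧ x = G'.welf w a}.Nonempty :=
        ⟨_, a', ha'.1, rfl⟩
      obtain ⟨b2, -, hb2⟩ := Set.Nonempty.csSup_mem hPne hPfin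
      show (0:ℝ) ≤ gameRatio G' w net f
      rw [gameRatio, ha2, hb2]
      exact div_nonneg (welf_nonneg hw G' a2) (welf_nonneg hw G' b2)
    -- direction 1 : every ratio is at least 1 / sSup S
    have hdir1 : ∀ q ∈ Q, 1 / sSup S ≤ q := by
      rintro q ⟨G, hGood, ⟨aN, haNash⟩, rfl⟩
      have hNfin := vals_finite G (G.IsNash net f) (G.welf w)
      have hNne : {x | ∃ a, G.IsNash net f a ∧ x = G.welf w a}.Nonempty :=
        ⟨_, aN, haNash, rfl⟩
      obtain ⟨aS, haS, haSw⟩ := Set.Nonempty.csInf_mem hNne hNfin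
      have hPfin := vals_finite G G.IsProfile (G.welf w)
      obtain ⟨p, hpP, hpw⟩ := hGood
      have hPne : {x | ∃ a, G.IsProfile a ∧ x = G.welf w a}.Nonempty :=
        ⟨_, p, hpP, rfl⟩
      obtain ⟨bS, hbS, hbSw⟩ := Set.Nonempty.csSup_mem hPne hPfin
      have hp : 0 < G.welf w aS := nash_welf_pos hw ⟨p, hpP, hpw⟩ hfpos haS
      have hbpos : 0 < G.welf w bS := by
        have hple := le_csSup hPfin.bddAbove (⟨p, hpP, rfl⟩ :
          G.welf w p ∈ {x | ∃ a, G.IsProfile a ∧ x = G.welf w a})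
        rw [hbSw] at hple
        exact lt_of_lt_of_le hpw hple
      have hcinv : (0:ℝ) ≤ 1 / G.welf w aS := by positivity
      have hmemS : G.welf w bS / G.welf w aS ∈ S := by
        refine ⟨G.scale (1 / G.welf w aS) hcinv,
          ⟨bS, hbS, ?_⟩, aS, scale_nash _ hcinv net f haS, ?_, bS, hbS, ?_⟩
        · rw [scale_welf]
          positivity
        · rw [scale_welf]
          field_simp
        · rw [scale_welf]
          ring
      have hle := le_csSup hSbdd hmemS
      show 1 / sSup S ≤ gameRatio G w net f
      rw [gameRatio, ← haSw, ← hbSw] at *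
      rw [haSw, hbSw]
      rw [div_le_div_iff₀ hWpos hbpos, one_mul]
      have := (div_le_iff₀ hp).mp hle
      linarith
    have h1 : 1 / sSup S ≤ sInf Q := le_csInf ⟨_, hq0⟩ hdir1
    have hPoApos : 0 < sInf Q := lt_of_lt_of_le (by positivity) h1
    -- direction 2 : every x ∈ S is at most 1 / sInf Q
    have hdir2 : ∀ x ∈ S, x ≤ 1 / sInf Q := by
      rintro x ⟨G, hGood, a, haN, haW, b, hbP, rfl⟩
      rcases (welf_nonneg hw G b).lt_or_eq with hx | hx
      · have hmemQ : gameRatio G w net f ∈ Q := ⟨G, hGood, ⟨a, haN⟩, rfl⟩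
        have hNfin := vals_finite G (G.IsNash net f) (G.welf w)
        have hPfin := vals_finite G G.IsProfile (G.welf w)
        have hmain : gameRatio G w net f ≤ 1 / G.welf w b := by
          rw [gameRatio]
          have hnum_le : sInf {x | ∃ a', G.IsNash net f a' ∧ x = G.welf w a'} ≤ 1 := by
            have := csInf_le hNfin.bddBelow (⟨a, haN, rfl⟩ :
              G.welf w a ∈ {x | ∃ a', G.IsNash net f a' ∧ x = G.welf w a'})
            rwa [haW] at this
          have hden : G.welf w b ≤ sSup {x | ∃ a', G.IsProfile a' ∧ x = G.welf w a'} :=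
            le_csSup hPfin.bddAbove ⟨b, hbP, rfl⟩
          exact div_le_div₀ zero_le_one hnum_le hx hden
        have hPoA_le : sInf Q ≤ 1 / G.welf w b := (csInf_le hQbdd hmemQ).trans hmain
        have h1' := (le_div_iff₀ hx).mp hPoA_le
        rw [le_div_iff₀ hPoApos]
        linarith
      · rw [← hx]
        positivity
    have h2 : sSup S ≤ 1 / sInf Q := csSup_le ⟨1, h1S⟩ hdir2
    rw [hPoA]
    have h3 : sInf Q ≤ 1 / sSup S := by
      rw [le_div_iff₀ hWpos]
      have := (le_div_iff₀ hPoApos).mp h2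
      linarith
    linarith
end

section
/- (Theorem 1, primal LP characterization of PoA.) Suppose f_j(1) > 0 for every j ∈ {1,…,k}. Then the primal LP value W* is finite and PoA(f,w,𝓒,𝓝) = 1/W*. -/
open Finset

namespace PoAAux
open Finset

variable {n k : ℕ}

lemma cnt_nonneg_le {G : RAGame n} (a : Fin n → Finset (Fin G.m)) (S : Finset (Fin n)) (r : Fin G.m) :
    G.cnt a S r ≤ S.card := Finset.card_filter_le _ _

lemma cnt_univ_le {G : RAGame n} (a : Fin n → Finset (Fin G.m)) (r : Fin G.m) :
    G.cnt a Finset.univ r ≤ n := by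
  simpa using cnt_nonneg_le a Finset.univ r

lemma w_cnt_nonneg {G : RAGame n} {w : ℕ → ℝ} (hw : IsBasis n w)
    (a : Fin n → Finset (Fin G.m)) (r : Fin G.m) : 0 ≤ w (G.cnt a Finset.univ r) := by
  rcases Nat.eq_zero_or_pos (G.cnt a Finset.univ r) with h | h
  · rw [h, hw.1]
  · exact le_of_lt (hw.2 _ h (cnt_univ_le a r))

lemma welf_nonneg {G : RAGame n} {w : ℕ → ℝ} (hw : IsBasis n w)
    (a : Fin n → Finset (Fin G.m)) : 0 ≤ G.welf w a :=
  Finset.sum_nonneg fun r _ => mul_nonneg (G.v_nonneg r) (w_cnt_nonneg hw a r)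

lemma cnt_congr {G : RAGame n} {a b : Fin n → Finset (Fin G.m)} {S : Finset (Fin n)}
    (h : ∀ i ∈ S, a i = b i) (r : Fin G.m) : G.cnt a S r = G.cnt b S r := by
  unfold RAGame.cnt
  congr 1
  exact Finset.filter_congr fun i hi => by rw [h i hi]

lemma cnt_erase {G : RAGame n} (a : Fin n → Finset (Fin G.m)) {S : Finset (Fin n)}
    {i : Fin n} (hi : i ∈ S) (r : Fin G.m) :
    G.cnt a S r = (if r ∈ a i then 1 else 0) + G.cnt a (S.erase i) r := by
  unfold RAGame.cnt
  rw [← Finset.insert_erase hi, Finset.filter_insert]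
  split <;> simp [Finset.card_insert_of_notMem, Finset.notMem_erase, Nat.add_comm]

lemma cnt_update {G : RAGame n} (a : Fin n → Finset (Fin G.m)) {S : Finset (Fin n)}
    {i : Fin n} (hi : i ∈ S) (b : Finset (Fin G.m)) (r : Fin G.m) :
    G.cnt (Function.update a i b) S r = (if r ∈ b then 1 else 0) + G.cnt a (S.erase i) r := by
  rw [cnt_erase (Function.update a i b) hi r, Function.update_self]
  congr 1
  exact cnt_congr (fun i' hi' => Function.update_of_ne (Finset.ne_of_mem_erase hi') _ _) r

/-- the key per-agent deviation identity -/
lemma util_sub (G : RAGame n) (net : Network n k) (f : Fin k → ℕ → ℝ)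
    (a : Fin n → Finset (Fin G.m)) (i : Fin n) (b : Finset (Fin G.m)) :
    G.util net f a i - G.util net f (Function.update a i b) i
      = ∑ r ∈ a i \ b, G.v r * f (net.cls i) (G.cnt a (net.Nb (net.cls i)) r)
        - ∑ r ∈ b \ a i, G.v r * f (net.cls i) (G.cnt a (net.Nb (net.cls i)) r + 1) := by
  classical
  have hiNb : i ∈ net.Nb (net.cls i) := net.mem_Nb i
  unfold RAGame.util
  rw [Function.update_self]
  have h1 : ∀ r ∈ b ∩ a i,
      G.v r * f (net.cls i) (G.cnt (Function.update a i b) (net.Nb (net.cls i)) r)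
        = G.v r * f (net.cls i) (G.cnt a (net.Nb (net.cls i)) r) := by
    intro r hr
    rw [Finset.mem_inter] at hr
    rw [cnt_update a hiNb b r, cnt_erase a hiNb r, if_pos hr.1, if_pos hr.2]
  have h2 : ∀ r ∈ b \ a i,
      G.v r * f (net.cls i) (G.cnt (Function.update a i b) (net.Nb (net.cls i)) r)
        = G.v r * f (net.cls i) (G.cnt a (net.Nb (net.cls i)) r + 1) := by
    intro r hr
    rw [Finset.mem_sdiff] at hr
    rw [cnt_update a hiNb b r, cnt_erase a hiNb r, if_pos hr.1, if_neg hr.2]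
    ring_nf
  have e1 := Finset.sum_inter_add_sum_sdiff (a i) b
      (fun r => G.v r * f (net.cls i) (G.cnt a (net.Nb (net.cls i)) r))
  have e2 := Finset.sum_inter_add_sum_sdiff b (a i)
      (fun r => G.v r * f (net.cls i) (G.cnt (Function.update a i b) (net.Nb (net.cls i)) r))
  rw [Finset.sum_congr rfl h1, Finset.sum_congr rfl h2] at e2
  have : b ∩ a i = a i ∩ b := Finset.inter_comm _ _
  rw [this] at e2
  linarith

end PoAAux
namespace PoAAux
open Finset

variable {n k : ℕ}

lemma mem_classSet {net : Network n k} {i : Fin n} {j : Fin k} :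
    i ∈ net.classSet j ↔ net.cls i = j := by simp [Network.classSet]

lemma κ_le_n (net : Network n k) (j : Fin k) : net.κ j ≤ n := by
  have := Finset.card_le_card (Finset.subset_univ (net.classSet j))
  simpa [Network.κ] using this

lemma sum_κ (net : Network n k) : ∑ j, net.κ j = n := by
  have := Finset.card_eq_sum_card_fiberwise
    (f := net.cls) (s := (Finset.univ : Finset (Fin n))) (t := Finset.univ)
    (fun x _ => Finset.mem_univ _)
  simpa [Network.κ, Network.classSet] using this.symm

lemma cnt_eq_sum_classes (G : RAGame n) (net : Network n k)
    (a : Fin n → Finset (Fin G.m)) {S : Finset (Fin n)}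
    (hS : ∀ i ∈ S, ∀ i', net.cls i' = net.cls i → i' ∈ S) (r : Fin G.m) :
    G.cnt a S r
      = ∑ l ∈ Finset.univ.filter (fun l => net.classSet l ⊆ S), G.cnt a (net.classSet l) r := by
  classical
  unfold RAGame.cnt
  rw [Finset.card_eq_sum_card_fiberwise (f := net.cls)
    (t := Finset.univ.filter (fun l => net.classSet l ⊆ S))
    (fun i hi => by
      rw [Finset.mem_coe, Finset.mem_filter] at hi
      rw [Finset.mem_coe, Finset.mem_filter]
      refine ⟨Finset.mem_univ _, fun i' hi' => ?_⟩
      rw [mem_classSet] at hi'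
      exact hS i hi.1 i' hi')]
  refine Finset.sum_congr rfl fun l hl => ?_
  rw [Finset.mem_filter] at hl
  congr 1
  ext i
  simp only [Finset.mem_filter, mem_classSet]
  constructor
  · rintro ⟨⟨hiS, hP⟩, hc⟩; exact ⟨hc, hP⟩
  · rintro ⟨hc, hP⟩
    exact ⟨⟨hl.2 (mem_classSet.2 hc), hP⟩, hc⟩

lemma cnt_univ_eq_sum (G : RAGame n) (net : Network n k)
    (a : Fin n → Finset (Fin G.m)) (r : Fin G.m) :
    G.cnt a Finset.univ r = ∑ l, G.cnt a (net.classSet l) r := by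
  rw [cnt_eq_sum_classes G net a (fun i _ i' _ => Finset.mem_univ _) r]
  congr 1
  exact Finset.filter_true_of_mem fun l _ => Finset.subset_univ _

lemma cnt_Nb_eq_sum (G : RAGame n) (net : Network n k)
    (a : Fin n → Finset (Fin G.m)) (j : Fin k) (r : Fin G.m) :
    G.cnt a (net.Nb j) r
      = ∑ l ∈ Finset.univ.filter (fun l => net.classSet l ⊆ net.Nb j),
          G.cnt a (net.classSet l) r :=
  cnt_eq_sum_classes G net a
    (fun i hi i' hi' => net.Nb_union j i i' hi'.symm hi) r

section Sig

variable (G : RAGame n) (net : Network n k)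
variable (ane aopt : Fin n → Finset (Fin G.m))

def sigA (r : Fin G.m) (j : Fin k) : ℕ :=
  ((net.classSet j).filter fun i => r ∈ ane i ∧ r ∉ aopt i).card

def sigX (r : Fin G.m) (j : Fin k) : ℕ :=
  ((net.classSet j).filter fun i => r ∈ ane i ∧ r ∈ aopt i).card

def sigB (r : Fin G.m) (j : Fin k) : ℕ :=
  ((net.classSet j).filter fun i => r ∉ ane i ∧ r ∈ aopt i).card

lemma sigA_add_sigX (r : Fin G.m) (j : Fin k) :
    sigA G net ane aopt r j + sigX G net ane aopt r j = G.cnt ane (net.classSet j) r := by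
  classical
  unfold sigA sigX RAGame.cnt
  rw [add_comm]
  have := Finset.card_filter_add_card_filter_not
    (s := (net.classSet j).filter fun i => r ∈ ane i) (p := fun i => r ∈ aopt i)
  rw [Finset.filter_filter, Finset.filter_filter] at this
  exact this

lemma sigB_add_sigX (r : Fin G.m) (j : Fin k) :
    sigB G net ane aopt r j + sigX G net ane aopt r j = G.cnt aopt (net.classSet j) r := by
  classical
  unfold sigB sigX RAGame.cnt
  have := Finset.card_filter_add_card_filter_not
    (s := (net.classSet j).filter fun i => r ∈ aopt i) (p := fun i => r ∈ ane i)
  rw [Finset.filter_filter, Finset.filter_filter] at this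
  rw [← this, add_comm]
  congr 1
  · congr 1; apply Finset.filter_congr; intro i _; simp [and_comm]
  · congr 1; apply Finset.filter_congr; intro i _; simp [and_comm]

lemma sig_sum_le (r : Fin G.m) (j : Fin k) :
    sigA G net ane aopt r j + sigX G net ane aopt r j + sigB G net ane aopt r j ≤ net.κ j := by
  classical
  have h1 := sigA_add_sigX G net ane aopt r j
  have h2 : G.cnt ane (net.classSet j) r
      + ((net.classSet j).filter fun i => ¬ r ∈ ane i).card = net.κ j :=
    Finset.card_filter_add_card_filter_not (p := fun i => r ∈ ane i)
  have h3 : sigB G net ane aopt r j ≤ ((net.classSet j).filter fun i => ¬ r ∈ ane i).card := by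
    apply Finset.card_le_card
    intro i hi
    rw [Finset.mem_filter] at hi ⊢
    exact ⟨hi.1, hi.2.1⟩
  omega

lemma sigA_lt (r : Fin G.m) (j : Fin k) : sigA G net ane aopt r j < n + 1 := by
  have := sig_sum_le G net ane aopt r j; have := κ_le_n net j; omega

lemma sigX_lt (r : Fin G.m) (j : Fin k) : sigX G net ane aopt r j < n + 1 := by
  have := sig_sum_le G net ane aopt r j; have := κ_le_n net j; omega

lemma sigB_lt (r : Fin G.m) (j : Fin k) : sigB G net ane aopt r j < n + 1 := by
  have := sig_sum_le G net ane aopt r j; have := κ_le_n net j; omega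

def sig (r : Fin G.m) : Idx n k := fun j =>
  (⟨sigA G net ane aopt r j, sigA_lt G net ane aopt r j⟩,
   ⟨sigX G net ane aopt r j, sigX_lt G net ane aopt r j⟩,
   ⟨sigB G net ane aopt r j, sigB_lt G net ane aopt r j⟩)

@[simp] lemma aI_sig (r : Fin G.m) (j : Fin k) : aI (sig G net ane aopt r) j = sigA G net ane aopt r j := rfl
@[simp] lemma xI_sig (r : Fin G.m) (j : Fin k) : xI (sig G net ane aopt r) j = sigX G net ane aopt r j := rfl
@[simp] lemma bI_sig (r : Fin G.m) (j : Fin k) : bI (sig G net ane aopt r) j = sigB G net ane aopt r j := rfl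

lemma mem_Rt_iff_sig (t : Idx n k) (r : Fin G.m) :
    r ∈ Rt G net ane aopt t ↔ t = sig G net ane aopt r := by
  classical
  unfold Rt
  rw [Finset.mem_filter]
  simp only [Finset.mem_univ, true_and]
  constructor
  · intro h
    funext j
    obtain ⟨h1, h2, h3⟩ := h j
    have e1 := sigA_add_sigX G net ane aopt r j
    have e2 := sigB_add_sigX G net ane aopt r j
    have hx : xI t j = sigX G net ane aopt r j := by
      rw [← h3]; rfl
    have ha : aI t j = sigA G net ane aopt r j := by omega
    have hb : bI t j = sigB G net ane aopt r j := by omega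
    have : ∀ (u v : Fin (n+1) × Fin (n+1) × Fin (n+1)), (u.1 : ℕ) = v.1 → (u.2.1 : ℕ) = v.2.1 →
        (u.2.2 : ℕ) = v.2.2 → u = v := by
      rintro ⟨u1, u2, u3⟩ ⟨v1, v2, v3⟩ e1 e2 e3
      simp only [Prod.mk.injEq]
      exact ⟨Fin.ext e1, Fin.ext e2, Fin.ext e3⟩
    exact this _ _ ha hx hb
  · rintro rfl j
    refine ⟨?_, ?_, rfl⟩
    · simpa using (sigA_add_sigX G net ane aopt r j).symm ▸ rfl
    · simpa using (sigB_add_sigX G net ane aopt r j).symm ▸ rfl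

lemma AtI_sig (r : Fin G.m) : AtI (sig G net ane aopt r) = G.cnt ane Finset.univ r := by
  unfold AtI
  rw [cnt_univ_eq_sum G net]
  exact Finset.sum_congr rfl fun j _ => sigA_add_sigX G net ane aopt r j

lemma BtI_sig (r : Fin G.m) : BtI (sig G net ane aopt r) = G.cnt aopt Finset.univ r := by
  unfold BtI
  rw [cnt_univ_eq_sum G net]
  exact Finset.sum_congr rfl fun j _ => by
    rw [← sigB_add_sigX G net ane aopt r j]; simp [add_comm]

lemma Atj_sig (r : Fin G.m) (j : Fin k) :
    Atj net (sig G net ane aopt r) j = G.cnt ane (net.Nb j) r := by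
  unfold Atj
  rw [cnt_Nb_eq_sum G net]
  exact Finset.sum_congr rfl fun l _ => sigA_add_sigX G net ane aopt r l

lemma mem_Iset_iff {κf : Fin k → ℕ} {t : Idx n k} :
    t ∈ Iset n k κf ↔ (∀ j, aI t j + xI t j + bI t j ≤ κf j) ∧
      1 ≤ ∑ j, (aI t j + xI t j + bI t j) ∧ ∑ j, (aI t j + xI t j + bI t j) ≤ n := by
  unfold Iset
  simp [Finset.mem_filter]

lemma sig_mem_iff (r : Fin G.m) :
    sig G net ane aopt r ∈ Iset n k net.κ
      ↔ 1 ≤ ∑ j, (sigA G net ane aopt r j + sigX G net ane aopt r j + sigB G net ane aopt r j) := by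
  rw [mem_Iset_iff]
  simp only [aI_sig, xI_sig, bI_sig]
  constructor
  · exact fun h => h.2.1
  · intro h
    refine ⟨fun j => sig_sum_le G net ane aopt r j, h, ?_⟩
    calc ∑ j, (sigA G net ane aopt r j + sigX G net ane aopt r j + sigB G net ane aopt r j)
        ≤ ∑ j, net.κ j := Finset.sum_le_sum fun j _ => sig_sum_le G net ane aopt r j
      _ = n := sum_κ net

lemma sig_not_mem (r : Fin G.m) (h : sig G net ane aopt r ∉ Iset n k net.κ) :
    G.cnt ane Finset.univ r = 0 ∧ G.cnt aopt Finset.univ r = 0 := by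
  rw [sig_mem_iff] at h
  push_neg at h
  have h0 : ∀ j, sigA G net ane aopt r j = 0 ∧ sigX G net ane aopt r j = 0
      ∧ sigB G net ane aopt r j = 0 := by
    intro j
    have hj : sigA G net ane aopt r j + sigX G net ane aopt r j + sigB G net ane aopt r j = 0 := by
      by_contra hc
      have : 1 ≤ ∑ j, (sigA G net ane aopt r j + sigX G net ane aopt r j + sigB G net ane aopt r j) :=
        Nat.one_le_iff_ne_zero.2 fun hs => hc (by
          have := (Finset.sum_eq_zero_iff (s := (Finset.univ : Finset (Fin k)))).1 hs j (Finset.mem_univ j)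
          omega)
      omega
    omega
  constructor
  · rw [cnt_univ_eq_sum G net]
    apply Finset.sum_eq_zero
    intro j _
    have := sigA_add_sigX G net ane aopt r j
    have := h0 j
    omega
  · rw [cnt_univ_eq_sum G net]
    apply Finset.sum_eq_zero
    intro j _
    have := sigB_add_sigX G net ane aopt r j
    have := h0 j
    omega

lemma sum_attach_ite {α : Type*} [DecidableEq α] (s : Finset α) (c : α) (x : ℝ) :
    (∑ t ∈ s.attach, if t.1 = c then x else 0) = if c ∈ s then x else 0 := by
  rw [Finset.sum_attach s (fun t => if t = c then x else 0)]
  exact Finset.sum_ite_eq' s c (fun _ => x)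

/-- the key pairing lemma: sums over `𝓘` weighted by `θof` are sums over resources -/
lemma sum_Rt_eq (F : Idx n k → ℝ) :
    ∑ t ∈ (Iset n k net.κ).attach, F t.1 * θof G net ane aopt t.1
      = ∑ r, (if sig G net ane aopt r ∈ Iset n k net.κ
          then F (sig G net ane aopt r) else 0) * G.v r := by
  classical
  have step1 : ∀ t : Idx n k, F t * θof G net ane aopt t
      = ∑ r, (if t = sig G net ane aopt r then F (sig G net ane aopt r) * G.v r else 0) := by
    intro t
    unfold θof
    rw [Finset.mul_sum]
    unfold Rt
    rw [Finset.sum_filter]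
    refine Finset.sum_congr rfl fun r _ => ?_
    have : (∀ j, G.cnt ane (net.classSet j) r = aI t j + xI t j ∧
        G.cnt aopt (net.classSet j) r = bI t j + xI t j ∧
        ((net.classSet j).filter fun i => r ∈ ane i ∧ r ∈ aopt i).card = xI t j)
        ↔ t = sig G net ane aopt r := by
      rw [← mem_Rt_iff_sig]
      unfold Rt
      simp
    by_cases h : t = sig G net ane aopt r
    · rw [if_pos (this.2 h), if_pos h, h]
    · rw [if_neg (fun hc => h (this.1 hc)), if_neg h]
  calc ∑ t ∈ (Iset n k net.κ).attach, F t.1 * θof G net ane aopt t.1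
      = ∑ t ∈ (Iset n k net.κ).attach, ∑ r,
          (if t.1 = sig G net ane aopt r then F (sig G net ane aopt r) * G.v r else 0) :=
        Finset.sum_congr rfl fun t _ => step1 t.1
    _ = ∑ r, ∑ t ∈ (Iset n k net.κ).attach,
          (if t.1 = sig G net ane aopt r then F (sig G net ane aopt r) * G.v r else 0) :=
        Finset.sum_comm
    _ = ∑ r, (if sig G net ane aopt r ∈ Iset n k net.κ
          then F (sig G net ane aopt r) else 0) * G.v r := by
        refine Finset.sum_congr rfl fun r _ => ?_
        rw [sum_attach_ite]
        split <;> simp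

end Sig

end PoAAux
namespace PoAAux
open Finset

variable {n k : ℕ}

lemma sum_ite_count {α : Type*} (s : Finset α) (P : α → Prop) [DecidablePred P] (c : ℝ) :
    (∑ i ∈ s, if P i then c else 0) = ((s.filter P).card : ℝ) * c := by
  rw [← Finset.sum_filter, Finset.sum_const, nsmul_eq_mul]

lemma θof_nonneg (G : RAGame n) (net : Network n k) (ane aopt : Fin n → Finset (Fin G.m))
    (t : Idx n k) : 0 ≤ θof G net ane aopt t :=
  Finset.sum_nonneg fun r _ => G.v_nonneg r

lemma sig_zero_of_not_mem (G : RAGame n) (net : Network n k)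
    (ane aopt : Fin n → Finset (Fin G.m)) (r : Fin G.m)
    (h : sig G net ane aopt r ∉ Iset n k net.κ) (j : Fin k) :
    sigA G net ane aopt r j = 0 ∧ sigX G net ane aopt r j = 0 ∧ sigB G net ane aopt r j = 0 := by
  rw [sig_mem_iff] at h
  push_neg at h
  have hs : ∑ j, (sigA G net ane aopt r j + sigX G net ane aopt r j + sigB G net ane aopt r j) = 0 := by
    omega
  have := (Finset.sum_eq_zero_iff (s := (Finset.univ : Finset (Fin k)))).1 hs j (Finset.mem_univ j)
  omega

lemma sum_w_AtI (G : RAGame n) (net : Network n k) (w : ℕ → ℝ) (hw : IsBasis n w)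
    (ane aopt : Fin n → Finset (Fin G.m)) :
    ∑ t ∈ (Iset n k net.κ).attach, w (AtI t.1) * θof G net ane aopt t.1 = G.welf w ane := by
  rw [sum_Rt_eq G net ane aopt (fun t => w (AtI t))]
  unfold RAGame.welf
  refine Finset.sum_congr rfl fun r _ => ?_
  rw [mul_comm (G.v r)]
  congr 1
  by_cases h : sig G net ane aopt r ∈ Iset n k net.κ
  · rw [if_pos h, AtI_sig]
  · rw [if_neg h, (sig_not_mem G net ane aopt r h).1, hw.1]

lemma sum_w_BtI (G : RAGame n) (net : Network n k) (w : ℕ → ℝ) (hw : IsBasis n w)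
    (ane aopt : Fin n → Finset (Fin G.m)) :
    ∑ t ∈ (Iset n k net.κ).attach, w (BtI t.1) * θof G net ane aopt t.1 = G.welf w aopt := by
  rw [sum_Rt_eq G net ane aopt (fun t => w (BtI t))]
  unfold RAGame.welf
  refine Finset.sum_congr rfl fun r _ => ?_
  rw [mul_comm (G.v r)]
  congr 1
  by_cases h : sig G net ane aopt r ∈ Iset n k net.κ
  · rw [if_pos h, BtI_sig]
  · rw [if_neg h, (sig_not_mem G net ane aopt r h).2, hw.1]

/-- the aggregated Nash constraint -/
lemma nash_constraint (G : RAGame n) (net : Network n k) (f : Fin k → ℕ → ℝ)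
    {ane aopt : Fin n → Finset (Fin G.m)}
    (hNash : G.IsNash net f ane) (hProf : G.IsProfile aopt) (j : Fin k) :
    0 ≤ ∑ t ∈ (Iset n k net.κ).attach,
        ((aI t.1 j : ℝ) * f j (Atj net t.1 j) - (bI t.1 j : ℝ) * f j (Atj net t.1 j + 1))
          * θof G net ane aopt t.1 := by
  classical
  rw [sum_Rt_eq G net ane aopt
    (fun t => (aI t j : ℝ) * f j (Atj net t j) - (bI t j : ℝ) * f j (Atj net t j + 1))]
  have key : ∀ r : Fin G.m,
      (if sig G net ane aopt r ∈ Iset n k net.κ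
        then (aI (sig G net ane aopt r) j : ℝ) * f j (Atj net (sig G net ane aopt r) j)
          - (bI (sig G net ane aopt r) j : ℝ) * f j (Atj net (sig G net ane aopt r) j + 1)
        else 0) * G.v r
      = ((sigA G net ane aopt r j : ℝ) * f j (G.cnt ane (net.Nb j) r)
          - (sigB G net ane aopt r j : ℝ) * f j (G.cnt ane (net.Nb j) r + 1)) * G.v r := by
    intro r
    by_cases h : sig G net ane aopt r ∈ Iset n k net.κ
    · rw [if_pos h, aI_sig, bI_sig, Atj_sig]
    · rw [if_neg h]
      obtain ⟨hA, _, hB⟩ := sig_zero_of_not_mem G net ane aopt r h j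
      rw [hA, hB]
      norm_num
  rw [Finset.sum_congr rfl fun r _ => key r]
  -- now show this equals the sum over agents in class j of utility differences
  have exch : ∑ r, ((sigA G net ane aopt r j : ℝ) * f j (G.cnt ane (net.Nb j) r)
        - (sigB G net ane aopt r j : ℝ) * f j (G.cnt ane (net.Nb j) r + 1)) * G.v r
      = ∑ i ∈ net.classSet j,
          (G.util net f ane i - G.util net f (Function.update ane i (aopt i)) i) := by
    have hcls : ∀ i ∈ net.classSet j, net.cls i = j := fun i hi => mem_classSet.1 hi
    have rhs : ∀ i ∈ net.classSet j,
        G.util net f ane i - G.util net f (Function.update ane i (aopt i)) i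
        = (∑ r, if r ∈ ane i ∧ r ∉ aopt i then G.v r * f j (G.cnt ane (net.Nb j) r) else 0)
          - ∑ r, if r ∉ ane i ∧ r ∈ aopt i then G.v r * f j (G.cnt ane (net.Nb j) r + 1) else 0 := by
      intro i hi
      rw [util_sub G net f ane i (aopt i), hcls i hi]
      congr 1
      · rw [← Finset.sum_filter]
        apply Finset.sum_congr _ (fun _ _ => rfl)
        ext r; simp [Finset.mem_sdiff]
      · rw [← Finset.sum_filter]
        apply Finset.sum_congr _ (fun _ _ => rfl)
        ext r; simp [Finset.mem_sdiff, and_comm]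
    rw [Finset.sum_congr rfl rhs, Finset.sum_sub_distrib, Finset.sum_comm, Finset.sum_comm (s := net.classSet j)]
    rw [← Finset.sum_sub_distrib]
    refine Finset.sum_congr rfl fun r _ => ?_
    rw [sum_ite_count, sum_ite_count]
    unfold sigA sigB
    ring
  rw [exch]
  apply Finset.sum_nonneg
  intro i _
  have := hNash.2 i (aopt i) (hProf i)
  linarith

lemma nash_welf_pos {G : RAGame n} {w : ℕ → ℝ} (hw : IsBasis n w) {net : Network n k}
    {f : Fin k → ℕ → ℝ} (hfpos : ∀ j, 0 < f j 1) {ne : Fin n → Finset (Fin G.m)}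
    (hNash : G.IsNash net f ne) (hGood : GoodGame G w) : 0 < G.welf w ne := by
  classical
  obtain ⟨a0, ha0, hpos⟩ := hGood
  by_contra hle
  push_neg at hle
  have hW0 : G.welf w ne = 0 := le_antisymm hle (welf_nonneg hw ne)
  have hterm : ∀ r, G.v r * w (G.cnt ne Finset.univ r) = 0 := fun r =>
    (Finset.sum_eq_zero_iff_of_nonneg
      (fun r _ => mul_nonneg (G.v_nonneg r) (w_cnt_nonneg hw ne r))).1 hW0 r (Finset.mem_univ r)
  have hzero : ∀ r, 0 < G.v r → G.cnt ne Finset.univ r = 0 := by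
    intro r hv
    by_contra h
    have h1 : 1 ≤ G.cnt ne Finset.univ r := Nat.one_le_iff_ne_zero.2 h
    have := hw.2 _ h1 (cnt_univ_le ne r)
    nlinarith [hterm r]
  obtain ⟨rs, hmem, hrs⟩ : ∃ r ∈ Finset.univ, 0 < G.v r * w (G.cnt a0 Finset.univ r) := by
    by_contra h; push_neg at h
    have : G.welf w a0 ≤ 0 := Finset.sum_nonpos fun r hr => h r hr
    unfold RAGame.welf at this
    have h2 := hpos
    unfold RAGame.welf at h2
    linarith
  have hvrs : 0 < G.v rs := by
    rcases (G.v_nonneg rs).lt_or_eq with h | h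
    · exact h
    · exfalso; rw [← h] at hrs; simp at hrs
  have hcnt : 0 < G.cnt a0 Finset.univ rs := by
    by_contra h
    push_neg at h
    have : G.cnt a0 Finset.univ rs = 0 := Nat.le_zero.1 h
    rw [this, hw.1, mul_zero] at hrs
    exact lt_irrefl _ hrs
  obtain ⟨i, hi⟩ : ∃ i, rs ∈ a0 i := by
    obtain ⟨i, hi⟩ := Finset.card_pos.1 hcnt
    exact ⟨i, (Finset.mem_filter.1 hi).2⟩
  have hvne : ∀ r, G.cnt ne Finset.univ r ≠ 0 → G.v r = 0 := by
    intro r h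
    by_contra hv
    exact h (hzero r (lt_of_le_of_ne (G.v_nonneg r) (Ne.symm hv)))
  have hUne : G.util net f ne i = 0 := by
    apply Finset.sum_eq_zero
    intro r hr
    have h1 : G.cnt ne Finset.univ r ≠ 0 := by
      intro h0
      have : i ∈ Finset.univ.filter fun i' => r ∈ ne i' := Finset.mem_filter.2 ⟨Finset.mem_univ i, hr⟩
      unfold RAGame.cnt at h0
      rw [Finset.card_eq_zero] at h0
      rw [h0] at this
      exact absurd this (Finset.notMem_empty i)
    rw [hvne r h1, zero_mul]
  have hcntdev : ∀ r ∈ a0 i, 0 < G.v r →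
      G.cnt (Function.update ne i (a0 i)) (net.Nb (net.cls i)) r = 1 := by
    intro r hr hv
    rw [cnt_update ne (net.mem_Nb i) (a0 i) r, if_pos hr]
    have hle2 : G.cnt ne ((net.Nb (net.cls i)).erase i) r ≤ G.cnt ne Finset.univ r := by
      apply Finset.card_le_card
      intro i' hi'
      rw [Finset.mem_filter] at hi' ⊢
      exact ⟨Finset.mem_univ _, hi'.2⟩
    have := hzero r hv
    omega
  have hpos2 : 0 < G.util net f (Function.update ne i (a0 i)) i := by
    unfold RAGame.util
    rw [Function.update_self]
    apply Finset.sum_pos'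
    · intro r hr
      by_cases hv : 0 < G.v r
      · rw [hcntdev r hr hv]
        exact le_of_lt (mul_pos hv (hfpos (net.cls i)))
      · have : G.v r = 0 := le_antisymm (not_lt.1 hv) (G.v_nonneg r)
        rw [this, zero_mul]
    · refine ⟨rs, hi, ?_⟩
      rw [hcntdev rs hi hvrs]
      exact mul_pos hvrs (hfpos (net.cls i))
  have := hNash.2 i (a0 i) (ha0 i)
  rw [hUne] at this
  linarith

/-- Direction A core: the welfare ratio of any (profile, Nash) pair is in `PrimalVals` -/
lemma ratio_mem_PrimalVals (G : RAGame n) (net : Network n k) (w : ℕ → ℝ) (hw : IsBasis n w)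
    (f : Fin k → ℕ → ℝ) {ne aopt : Fin n → Finset (Fin G.m)}
    (hNash : G.IsNash net f ne) (hProf : G.IsProfile aopt) (hWpos : 0 < G.welf w ne) :
    G.welf w aopt / G.welf w ne ∈ PrimalVals n k net w f := by
  refine ⟨fun t => θof G net ne aopt t.1 / G.welf w ne, ⟨?_, ?_, ?_⟩, ?_⟩
  · intro t
    exact div_nonneg (θof_nonneg G net ne aopt t.1) (le_of_lt hWpos)
  · intro j
    have h := nash_constraint G net f hNash hProf j
    have : ∀ t ∈ (Iset n k net.κ).attach,
        ((aI t.1 j : ℝ) * f j (Atj net t.1 j) - (bI t.1 j : ℝ) * f j (Atj net t.1 j + 1))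
          * (θof G net ne aopt t.1 / G.welf w ne)
        = (((aI t.1 j : ℝ) * f j (Atj net t.1 j) - (bI t.1 j : ℝ) * f j (Atj net t.1 j + 1))
            * θof G net ne aopt t.1) / G.welf w ne := fun t _ => by ring
    rw [Finset.sum_congr rfl this, ← Finset.sum_div]
    exact div_nonneg h (le_of_lt hWpos)
  · have : ∀ t ∈ (Iset n k net.κ).attach,
        w (AtI t.1) * (θof G net ne aopt t.1 / G.welf w ne)
        = (w (AtI t.1) * θof G net ne aopt t.1) / G.welf w ne := fun t _ => by ring
    rw [Finset.sum_congr rfl this, ← Finset.sum_div, sum_w_AtI G net w hw ne aopt]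
    exact div_self (ne_of_gt hWpos)
  · unfold primalObj
    have : ∀ t ∈ (Iset n k net.κ).attach,
        w (BtI t.1) * (θof G net ne aopt t.1 / G.welf w ne)
        = (w (BtI t.1) * θof G net ne aopt t.1) / G.welf w ne := fun t _ => by ring
    rw [Finset.sum_congr rfl this, ← Finset.sum_div, sum_w_BtI G net w hw ne aopt]

end PoAAux
namespace PoAAux
open Finset

variable {n k : ℕ}

lemma AtI_le_n {κf : Fin k → ℕ} (hκ : ∀ j, κf j ≤ n) {t : Idx n k} (ht : t ∈ Iset n k κf) :
    AtI t ≤ n := by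
  rw [mem_Iset_iff] at ht
  calc AtI t ≤ ∑ j, (aI t j + xI t j + bI t j) := Finset.sum_le_sum fun j _ => by omega
    _ ≤ n := ht.2.2

lemma sum_mul_ite_attach {α : Type*} [DecidableEq α] (s : Finset α) (t0 : α) (c : ℝ)
    (g : α → ℝ) :
    (∑ t ∈ s.attach, g t.1 * (if t.1 = t0 then c else 0)) = if t0 ∈ s then g t0 * c else 0 := by
  rw [← sum_attach_ite s t0 (g t0 * c)]
  refine Finset.sum_congr rfl fun t _ => ?_
  by_cases h : t.1 = t0
  · rw [if_pos h, if_pos h, h]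
  · rw [if_neg h, if_neg h, mul_zero]

def unitIdx (n k : ℕ) (hn : 1 ≤ n) (j0 : Fin k) : Idx n k := fun j =>
  if j = j0 then (⟨0, by omega⟩, ⟨1, by omega⟩, ⟨0, by omega⟩)
  else (⟨0, by omega⟩, ⟨0, by omega⟩, ⟨0, by omega⟩)

lemma unitIdx_aI (hn : 1 ≤ n) (j0 j : Fin k) : aI (unitIdx n k hn j0) j = 0 := by
  unfold unitIdx aI
  by_cases h : j = j0 <;> simp [h]

lemma unitIdx_bI (hn : 1 ≤ n) (j0 j : Fin k) : bI (unitIdx n k hn j0) j = 0 := by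
  unfold unitIdx bI
  by_cases h : j = j0 <;> simp [h]

lemma unitIdx_xI (hn : 1 ≤ n) (j0 j : Fin k) :
    xI (unitIdx n k hn j0) j = if j = j0 then 1 else 0 := by
  unfold unitIdx xI
  by_cases h : j = j0 <;> simp [h]

/-- `1 ∈ PrimalVals` -/
lemma one_mem_PrimalVals (hn : 1 ≤ n) (w : ℕ → ℝ) (hw : IsBasis n w)
    (net : Network n k) (f : Fin k → ℕ → ℝ) : (1 : ℝ) ∈ PrimalVals n k net w f := by
  classical
  have hw1 : 0 < w 1 := hw.2 1 le_rfl hn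
  obtain ⟨i0⟩ : Nonempty (Fin n) := ⟨⟨0, hn⟩⟩
  obtain ⟨j0, hj0⟩ : ∃ j0 : Fin k, i0 ∈ net.classSet j0 := ⟨net.cls i0, mem_classSet.2 rfl⟩
  set t0 : Idx n k := unitIdx n k hn j0 with ht0
  have hκ0 : 1 ≤ net.κ j0 := by
    have h := Finset.card_pos.2 ⟨i0, hj0⟩
    exact h
  have hsum : ∀ j, aI t0 j + xI t0 j + bI t0 j = if j = j0 then 1 else 0 := by
    intro j
    rw [unitIdx_aI, unitIdx_bI, unitIdx_xI]
    by_cases h : j = j0 <;> simp [h]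
  have hsumt : ∑ j, (aI t0 j + xI t0 j + bI t0 j) = 1 := by
    rw [Finset.sum_congr rfl fun j _ => hsum j]
    simp
  have hmem : t0 ∈ Iset n k net.κ := by
    rw [mem_Iset_iff]
    refine ⟨fun j => ?_, by omega, by omega⟩
    rw [hsum]
    by_cases h : j = j0
    · rw [if_pos h, h]; exact hκ0
    · rw [if_neg h]; exact Nat.zero_le _
  have hAtI : AtI t0 = 1 := by
    unfold AtI
    rw [Finset.sum_congr rfl fun j (_ : j ∈ Finset.univ) =>
      (by rw [unitIdx_aI, unitIdx_xI, zero_add] :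
        aI t0 j + xI t0 j = if j = j0 then 1 else 0)]
    simp
  have hBtI : BtI t0 = 1 := by
    unfold BtI
    rw [Finset.sum_congr rfl fun j (_ : j ∈ Finset.univ) =>
      (by rw [unitIdx_bI, unitIdx_xI, zero_add] :
        bI t0 j + xI t0 j = if j = j0 then 1 else 0)]
    simp
  refine ⟨fun t => if t.1 = t0 then (w 1)⁻¹ else 0, ⟨?_, ?_, ?_⟩, ?_⟩
  · intro t; positivity
  · intro j
    rw [sum_mul_ite_attach (Iset n k net.κ) t0 (w 1)⁻¹
      (fun t => (aI t j : ℝ) * f j (Atj net t j) - (bI t j : ℝ) * f j (Atj net t j + 1))]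
    rw [if_pos hmem, unitIdx_aI, unitIdx_bI]
    simp
  · rw [sum_mul_ite_attach (Iset n k net.κ) t0 (w 1)⁻¹ (fun t => w (AtI t))]
    rw [if_pos hmem, hAtI]
    field_simp
  · unfold primalObj
    rw [sum_mul_ite_attach (Iset n k net.κ) t0 (w 1)⁻¹ (fun t => w (BtI t))]
    rw [if_pos hmem, hBtI]
    field_simp

/-- all feasible `θ` are uniformly bounded -/
lemma exists_uniform_bound (w : ℕ → ℝ) (hw : IsBasis n w)
    (net : Network n k) (f : Fin k → ℕ → ℝ) (hfpos : ∀ j, 0 < f j 1) :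
    ∃ M : ℝ, ∀ θ : {t : Idx n k // t ∈ Iset n k net.κ} → ℝ,
      PrimalFeasible n k net w f θ → ∀ t, θ t ≤ M := by
  classical
  set s := (Iset n k net.κ).attach with hs
  set cj : Fin k → Idx n k → ℝ := fun j t =>
    (aI t j : ℝ) * f j (Atj net t j) - (bI t j : ℝ) * f j (Atj net t j + 1) with hcj
  set C1 : ℝ := ∑ t ∈ s, if 1 ≤ AtI t.1 then (w (AtI t.1))⁻¹ else 0 with hC1
  set E : Fin k → ℝ := fun j => ∑ t ∈ s, if 1 ≤ AtI t.1 then |cj j t.1| * (w (AtI t.1))⁻¹ else 0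
    with hE
  refine ⟨C1 + ∑ j, E j / f j 1, ?_⟩
  intro θ hθ
  obtain ⟨hpos, hcon, heq⟩ := hθ
  have hwA : ∀ t : {t : Idx n k // t ∈ Iset n k net.κ}, 1 ≤ AtI t.1 → 0 < w (AtI t.1) :=
    fun t h => hw.2 _ h (AtI_le_n (κ_le_n net) t.2)
  have hwA0 : ∀ t : {t : Idx n k // t ∈ Iset n k net.κ}, ¬ 1 ≤ AtI t.1 → w (AtI t.1) = 0 := by
    intro t h
    have : AtI t.1 = 0 := by omega
    rw [this, hw.1]
  have hitenn : ∀ t' ∈ s, (0:ℝ) ≤ if 1 ≤ AtI t'.1 then (w (AtI t'.1))⁻¹ else 0 := by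
    intro t' _
    by_cases h' : 1 ≤ AtI t'.1
    · rw [if_pos h']; exact le_of_lt (inv_pos.2 (hwA t' h'))
    · rw [if_neg h']
  have htermnn : ∀ t ∈ s, 0 ≤ w (AtI t.1) * θ t := by
    intro t _
    by_cases h : 1 ≤ AtI t.1
    · exact mul_nonneg (le_of_lt (hwA t h)) (hpos t)
    · rw [hwA0 t h, zero_mul]
  have hbound1 : ∀ (t : {t : Idx n k // t ∈ Iset n k net.κ}), 1 ≤ AtI t.1 →
      θ t ≤ (w (AtI t.1))⁻¹ := by
    intro t h
    have h1 : w (AtI t.1) * θ t ≤ 1 := by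
      rw [← heq]
      exact Finset.single_le_sum htermnn (Finset.mem_attach _ t)
    rw [← one_div, le_div_iff₀ (hwA t h)]
    linarith [mul_comm (w (AtI t.1)) (θ t)]
  have hC1nn : (0:ℝ) ≤ C1 := Finset.sum_nonneg hitenn
  have hEnn : ∀ j, 0 ≤ E j := by
    intro j
    apply Finset.sum_nonneg
    intro t _
    by_cases h : 1 ≤ AtI t.1
    · rw [if_pos h]
      exact mul_nonneg (abs_nonneg _) (le_of_lt (inv_pos.2 (hwA t h)))
    · rw [if_neg h]
  have hC2nn : (0:ℝ) ≤ ∑ j, E j / f j 1 :=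
    Finset.sum_nonneg fun j _ => div_nonneg (hEnn j) (le_of_lt (hfpos j))
  have hbound0 : ∀ t0, ¬ 1 ≤ AtI t0.1 → ∃ j, f j 1 * θ t0 ≤ E j := by
    intro t0 hA
    have hA0 : AtI t0.1 = 0 := by omega
    have hax : ∀ l, aI t0.1 l = 0 ∧ xI t0.1 l = 0 := by
      intro l
      have := (Finset.sum_eq_zero_iff (s := (Finset.univ : Finset (Fin k)))).1 hA0 l (Finset.mem_univ l)
      omega
    obtain ⟨j, hbj⟩ : ∃ j, 1 ≤ bI t0.1 j := by
      have hmem := (mem_Iset_iff.1 t0.2).2.1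
      by_contra hcon2
      push_neg at hcon2
      have : ∑ j, (aI t0.1 j + xI t0.1 j + bI t0.1 j) = 0 :=
        Finset.sum_eq_zero fun j _ => by have := hax j; have := hcon2 j; omega
      omega
    refine ⟨j, ?_⟩
    have hAtj0 : ∀ (t : {t : Idx n k // t ∈ Iset n k net.κ}), ¬ 1 ≤ AtI t.1 →
        Atj net t.1 j = 0 := by
      intro t h
      have hA0' : AtI t.1 = 0 := by omega
      unfold Atj
      apply Finset.sum_eq_zero
      intro l _
      have := (Finset.sum_eq_zero_iff (s := (Finset.univ : Finset (Fin k)))).1 hA0' l (Finset.mem_univ l)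
      omega
    have haI0 : ∀ (t : {t : Idx n k // t ∈ Iset n k net.κ}), ¬ 1 ≤ AtI t.1 → aI t.1 j = 0 := by
      intro t h
      have hA0' : AtI t.1 = 0 := by omega
      have := (Finset.sum_eq_zero_iff (s := (Finset.univ : Finset (Fin k)))).1 hA0' j (Finset.mem_univ j)
      omega
    have hcjval : ∀ (t : {t : Idx n k // t ∈ Iset n k net.κ}), ¬ 1 ≤ AtI t.1 →
        cj j t.1 = -((bI t.1 j : ℝ) * f j 1) := by
      intro t h
      rw [hcj]
      simp only
      rw [haI0 t h, hAtj0 t h, Nat.cast_zero, zero_mul, zero_add]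
      ring
    have hcjneg : ∀ t ∈ s.filter (fun t => ¬ 1 ≤ AtI t.1), cj j t.1 * θ t ≤ 0 := by
      intro t ht
      rw [Finset.mem_filter] at ht
      rw [hcjval t ht.2]
      have h3 : (0:ℝ) ≤ (bI t.1 j : ℝ) * f j 1 :=
        mul_nonneg (Nat.cast_nonneg _) (le_of_lt (hfpos j))
      have h4 := hpos t
      nlinarith [mul_nonneg h3 h4]
    have ht0f : t0 ∈ s.filter (fun t => ¬ 1 ≤ AtI t.1) :=
      Finset.mem_filter.2 ⟨Finset.mem_attach _ t0, hA⟩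
    have hSneg : ∑ t ∈ s.filter (fun t => ¬ 1 ≤ AtI t.1), cj j t.1 * θ t
        ≤ -(f j 1 * θ t0) := by
      rw [← Finset.sum_erase_add _ _ ht0f]
      have e1 : ∑ t ∈ (s.filter (fun t => ¬ 1 ≤ AtI t.1)).erase t0, cj j t.1 * θ t ≤ 0 :=
        Finset.sum_nonpos fun t ht => hcjneg t (Finset.mem_of_mem_erase ht)
      have e2 : cj j t0.1 * θ t0 ≤ -(f j 1 * θ t0) := by
        rw [hcjval t0 hA]
        have hb1 : (1:ℝ) ≤ (bI t0.1 j : ℝ) := by exact_mod_cast hbj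
        have h4 := hpos t0
        nlinarith [mul_nonneg (sub_nonneg.2 hb1) (mul_nonneg (le_of_lt (hfpos j)) h4)]
      linarith
    have hSpos : ∑ t ∈ s.filter (fun t => 1 ≤ AtI t.1), cj j t.1 * θ t ≤ E j := by
      rw [hE]
      simp only
      rw [← Finset.sum_filter]
      apply Finset.sum_le_sum
      intro t ht
      rw [Finset.mem_filter] at ht
      have h1 : cj j t.1 * θ t ≤ |cj j t.1| * θ t :=
        mul_le_mul_of_nonneg_right (le_abs_self _) (hpos t)
      have h2 : |cj j t.1| * θ t ≤ |cj j t.1| * (w (AtI t.1))⁻¹ :=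
        mul_le_mul_of_nonneg_left (hbound1 t ht.2) (abs_nonneg _)
      exact le_trans h1 h2
    have hsplit := Finset.sum_filter_add_sum_filter_not s (fun t => 1 ≤ AtI t.1)
      (fun t => cj j t.1 * θ t)
    have hconj' : (0:ℝ) ≤ ∑ t ∈ s, cj j t.1 * θ t := hcon j
    rw [← hsplit] at hconj'
    linarith
  intro t
  by_cases h : 1 ≤ AtI t.1
  · have h1 : θ t ≤ (w (AtI t.1))⁻¹ := hbound1 t h
    have h2 : (if 1 ≤ AtI t.1 then (w (AtI t.1))⁻¹ else 0) ≤ C1 :=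
      Finset.single_le_sum hitenn (Finset.mem_attach _ t)
    rw [if_pos h] at h2
    linarith
  · obtain ⟨j, hj⟩ := hbound0 t h
    have h1 : θ t ≤ E j / f j 1 := by
      rw [le_div_iff₀ (hfpos j)]
      linarith [mul_comm (f j 1) (θ t)]
    have h2 : E j / f j 1 ≤ ∑ j', E j' / f j' 1 :=
      Finset.single_le_sum (fun j' _ => div_nonneg (hEnn j') (le_of_lt (hfpos j')))
        (Finset.mem_univ j)
    linarith

lemma bddAbove_PrimalVals (w : ℕ → ℝ) (hw : IsBasis n w)
    (net : Network n k) (f : Fin k → ℕ → ℝ) (hfpos : ∀ j, 0 < f j 1) :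
    BddAbove (PrimalVals n k net w f) := by
  obtain ⟨M, hM⟩ := exists_uniform_bound w hw net f hfpos
  refine ⟨∑ t ∈ (Iset n k net.κ).attach, |w (BtI t.1)| * max M 0, ?_⟩
  rintro x ⟨θ, hθ, rfl⟩
  unfold primalObj
  apply Finset.sum_le_sum
  intro t _
  have h1 : θ t ≤ max M 0 := le_trans (hM θ hθ t) (le_max_left _ _)
  have h2 : 0 ≤ θ t := hθ.1 t
  calc w (BtI t.1) * θ t ≤ |w (BtI t.1)| * θ t :=
        mul_le_mul_of_nonneg_right (le_abs_self _) h2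
    _ ≤ |w (BtI t.1)| * max M 0 := mul_le_mul_of_nonneg_left h1 (abs_nonneg _)

end PoAAux
namespace PoAAux
open Finset

variable {n k : ℕ}

lemma card_filter_equiv {α β : Type*} [Fintype α] [Fintype β] [DecidableEq β] (e : α ≃ β)
    (P : β → Prop) [DecidablePred P] :
    ((Finset.univ : Finset α).filter fun a => P (e a)).card
      = ((Finset.univ : Finset β).filter P).card := by
  apply Finset.card_nbij (i := fun a => e a)
  · intro a ha
    rw [Finset.mem_coe, Finset.mem_filter] at ha ⊢
    exact ⟨Finset.mem_univ _, ha.2⟩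
  · intro a _ a' _ h
    exact e.injective h
  · intro b hb
    rw [Finset.mem_coe, Finset.mem_filter] at hb
    exact ⟨e.symm b, Finset.mem_filter.2 ⟨Finset.mem_univ _, by simpa using hb.2⟩, by simp⟩

lemma card_filter_Ico (c lo hi : ℕ) (hhi : hi ≤ c) :
    (((Finset.univ : Finset (Fin c))).filter fun q : Fin c => lo ≤ (q : ℕ) ∧ (q : ℕ) < hi).card
      = hi - lo := by
  rw [← Nat.card_Ico lo hi]
  apply Finset.card_nbij (i := fun q : Fin c => (q : ℕ))
  · intro q hq
    rw [Finset.mem_coe, Finset.mem_filter] at hq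
    exact Finset.mem_Ico.2 hq.2
  · intro q _ q' _ h
    exact Fin.ext h
  · intro m hm
    rw [Finset.mem_coe, Finset.mem_Ico] at hm
    exact ⟨⟨m, lt_of_lt_of_le hm.2 hhi⟩, Finset.mem_filter.2 ⟨Finset.mem_univ _, hm⟩, rfl⟩

lemma card_filter_shift_left (c : ℕ) [NeZero c] (p : ℕ) (hp : p < c) (lo hi : ℕ)
    (hhi : hi ≤ c) :
    (((Finset.univ : Finset (Fin c))).filter
        fun q : Fin c => lo ≤ (p + (c - (q : ℕ))) % c ∧ (p + (c - (q : ℕ))) % c < hi).card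
      = hi - lo := by
  have key : ∀ q : Fin c, (p + (c - (q : ℕ))) % c = (((⟨p, hp⟩ : Fin c) - q : Fin c) : ℕ) := by
    intro q
    rw [Fin.sub_def]
    simp [Nat.add_comm]
  rw [Finset.filter_congr (fun q _ => by rw [key q])]
  have h2 := card_filter_equiv (Equiv.subLeft (⟨p, hp⟩ : Fin c))
    (fun z : Fin c => lo ≤ (z : ℕ) ∧ (z : ℕ) < hi)
  simp only [Equiv.subLeft_apply] at h2
  rw [h2]
  exact card_filter_Ico c lo hi hhi

lemma card_filter_shift_right (c : ℕ) [NeZero c] (sv : Fin c) (lo hi : ℕ) (hhi : hi ≤ c) :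
    (((Finset.univ : Finset (Fin c))).filter
        fun q : Fin c => lo ≤ ((q : ℕ) + (c - (sv : ℕ))) % c ∧ ((q : ℕ) + (c - (sv : ℕ))) % c < hi).card
      = hi - lo := by
  have key : ∀ q : Fin c, ((q : ℕ) + (c - (sv : ℕ))) % c = ((q - sv : Fin c) : ℕ) := by
    intro q
    rw [Fin.sub_def]
    simp [Nat.add_comm]
  rw [Finset.filter_congr (fun q _ => by rw [key q])]
  have h2 := card_filter_equiv (Equiv.subRight (sv : Fin c))
    (fun z : Fin c => lo ≤ (z : ℕ) ∧ (z : ℕ) < hi)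
  simp only [Equiv.subRight_apply] at h2
  rw [h2]
  exact card_filter_Ico c lo hi hhi

/-- evaluation sums over pi types -/
lemma sum_eval {α : Type*} [Fintype α] [DecidableEq α] {β : α → Type*} [∀ a, Fintype (β a)]
    (j : α) (F : β j → ℝ) :
    ∑ s : ∀ a, β a, F (s j)
      = (Fintype.card (∀ a : {a // a ≠ j}, β a) : ℝ) * ∑ q, F q := by
  classical
  rw [← Equiv.sum_comp (Equiv.piSplitAt j β).symm (fun s => F (s j))]
  have : ∀ y : β j × ∀ a : {a // a ≠ j}, β a, F (((Equiv.piSplitAt j β).symm y) j) = F y.1 := by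
    intro y
    congr 1
    rw [Equiv.piSplitAt_symm_apply, dif_pos rfl]
  rw [Finset.sum_congr rfl fun y _ => this y]
  rw [Fintype.sum_prod_type]
  rw [Finset.sum_congr rfl fun q (_ : q ∈ Finset.univ) => Finset.sum_const (F q)]
  rw [← Finset.smul_sum]
  simp [nsmul_eq_mul]

end PoAAux
namespace PoAAux
open Finset
noncomputable section

variable {n k : ℕ}

lemma κ_pos (net : Network n k) (j : Fin k) : 1 ≤ net.κ j := by
  obtain ⟨i, hi⟩ := net.cls_surj j
  exact Finset.card_pos.2 ⟨i, mem_classSet.2 hi⟩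

def rk (net : Network n k) (i : Fin n) : ℕ :=
  ((net.classSet (net.cls i)).equivFin ⟨i, mem_classSet.2 rfl⟩ : Fin _).val

lemma rk_eq (net : Network n k) (i : Fin n) {l : Fin k} (h : net.cls i = l) :
    rk net i = ((net.classSet l).equivFin ⟨i, mem_classSet.2 h⟩ : Fin _).val := by
  subst h; rfl

lemma rk_lt (net : Network n k) (i : Fin n) : rk net i < net.κ (net.cls i) :=
  ((net.classSet (net.cls i)).equivFin ⟨i, mem_classSet.2 rfl⟩).isLt

/-- the bijection between a class and ranks -/
lemma card_class_rank (net : Network n k) (l : Fin k) (P : ℕ → Prop) [DecidablePred P] :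
    ((net.classSet l).filter fun i => P (rk net i)).card
      = ((Finset.univ : Finset (Fin (net.κ l))).filter fun q : Fin (net.κ l) => P (q : ℕ)).card := by
  apply Finset.card_bij (fun i hi => (net.classSet l).equivFin ⟨i, (Finset.mem_filter.1 hi).1⟩)
  · intro i hi
    have hi' := Finset.mem_filter.1 hi
    refine Finset.mem_filter.2 ⟨Finset.mem_univ _, ?_⟩
    have := rk_eq net i (mem_classSet.1 hi'.1)
    rw [this] at hi'
    exact hi'.2
  · intro i hi i' hi' h
    have := (net.classSet l).equivFin.injective h
    exact congrArg Subtype.val this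
  · intro q hq
    replace hq := Finset.mem_filter.1 hq
    refine ⟨((net.classSet l).equivFin.symm q).1, ?_, ?_⟩
    · rw [Finset.mem_filter]
      refine ⟨((net.classSet l).equivFin.symm q).2, ?_⟩
      have h := rk_eq net ((net.classSet l).equivFin.symm q).1
        (mem_classSet.1 ((net.classSet l).equivFin.symm q).2)
      rw [h]
      have : (⟨((net.classSet l).equivFin.symm q).1, _⟩ : {x // x ∈ net.classSet l})
          = (net.classSet l).equivFin.symm q := Subtype.ext rfl
      rw [this, Equiv.apply_symm_apply]
      exact hq.2
    · have : (⟨((net.classSet l).equivFin.symm q).1, _⟩ : {x // x ∈ net.classSet l})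
          = (net.classSet l).equivFin.symm q := Subtype.ext rfl
      rw [this, Equiv.apply_symm_apply]

section Cons

variable (net : Network n k)

abbrev Tsub := {t : Idx n k // t ∈ Iset n k net.κ}
abbrev Shift := ∀ j : Fin k, Fin (net.κ j)
abbrev RT := Tsub net × Shift net

instance : Nonempty (Shift net) := ⟨fun j => ⟨0, κ_pos net j⟩⟩

def posOf (s : Shift net) (i : Fin n) : ℕ :=
  (rk net i + (net.κ (net.cls i) - (s (net.cls i) : ℕ))) % net.κ (net.cls i)

noncomputable def eRes : RT net ≃ Fin (Fintype.card (RT net)) := Fintype.equivFin _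

def neA (i : Fin n) : Finset (RT net) :=
  Finset.univ.filter fun ρ =>
    posOf net ρ.2 i < aI ρ.1.1 (net.cls i) + xI ρ.1.1 (net.cls i)

def optA (i : Fin n) : Finset (RT net) :=
  Finset.univ.filter fun ρ =>
    aI ρ.1.1 (net.cls i) ≤ posOf net ρ.2 i ∧
      posOf net ρ.2 i < aI ρ.1.1 (net.cls i) + xI ρ.1.1 (net.cls i) + bI ρ.1.1 (net.cls i)

noncomputable def ConsGame (θv : Tsub net → ℝ) (hθ : ∀ t, 0 ≤ θv t) : RAGame n where
  m := Fintype.card (RT net)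
  v := fun r => θv ((eRes net).symm r).1
  v_nonneg := fun _ => hθ _
  act := fun i => {(neA net i).map (eRes net).toEmbedding,
                   (optA net i).map (eRes net).toEmbedding}
  act_nonempty := fun _ => ⟨_, Finset.mem_insert_self _ _⟩

attribute [reducible] ConsGame

variable (θv : Tsub net → ℝ) (hθ : ∀ t, 0 ≤ θv t)

noncomputable def nePr : Fin n → Finset (Fin (ConsGame net θv hθ).m) :=
  fun i => (neA net i).map (eRes net).toEmbedding

noncomputable def optPr : Fin n → Finset (Fin (ConsGame net θv hθ).m) :=
  fun i => (optA net i).map (eRes net).toEmbedding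

lemma mem_nePr (i : Fin n) (ρ : RT net) :
    (eRes net) ρ ∈ nePr net θv hθ i ↔
      posOf net ρ.2 i < aI ρ.1.1 (net.cls i) + xI ρ.1.1 (net.cls i) := by
  unfold nePr
  erw [Finset.mem_map_equiv, Equiv.symm_apply_apply]
  unfold neA
  simp

lemma mem_optPr (i : Fin n) (ρ : RT net) :
    (eRes net) ρ ∈ optPr net θv hθ i ↔
      (aI ρ.1.1 (net.cls i) ≤ posOf net ρ.2 i ∧
        posOf net ρ.2 i < aI ρ.1.1 (net.cls i) + xI ρ.1.1 (net.cls i) + bI ρ.1.1 (net.cls i)) := by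
  unfold optPr
  erw [Finset.mem_map_equiv, Equiv.symm_apply_apply]
  unfold optA
  simp

/-- generic class-count lemma for the constructed game -/
lemma cnt_class_cons (pr : Fin n → Finset (Fin (ConsGame net θv hθ).m)) (l : Fin k)
    (r : Fin (ConsGame net θv hθ).m) (sv : Fin (net.κ l)) (P : ℕ → Prop) [DecidablePred P]
    (hmem : ∀ i ∈ net.classSet l,
      (r ∈ pr i ↔ P ((rk net i + (net.κ l - (sv : ℕ))) % net.κ l))) (lo hi : ℕ)
    (hP : ∀ m, m < net.κ l → (P m ↔ lo ≤ m ∧ m < hi)) (hhi : hi ≤ net.κ l) :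
    (ConsGame net θv hθ).cnt pr (net.classSet l) r = hi - lo := by
  haveI : NeZero (net.κ l) := ⟨by have := κ_pos net l; omega⟩
  unfold RAGame.cnt
  rw [Finset.filter_congr hmem]
  rw [card_class_rank net l (fun m => P ((m + (net.κ l - (sv : ℕ))) % net.κ l))]
  rw [Finset.filter_congr (fun q (_ : q ∈ Finset.univ) =>
    hP _ (Nat.mod_lt _ (by have := κ_pos net l; omega)))]
  exact card_filter_shift_right (net.κ l) sv lo hi hhi

lemma cnt_ne_class (l : Fin k) (ρ : RT net) :
    (ConsGame net θv hθ).cnt (nePr net θv hθ) (net.classSet l) ((eRes net) ρ)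
      = aI ρ.1.1 l + xI ρ.1.1 l := by
  have hbound := (mem_Iset_iff.1 ρ.1.2).1 l
  have := cnt_class_cons net θv hθ (nePr net θv hθ) l ((eRes net) ρ) (ρ.2 l)
    (fun m => m < aI ρ.1.1 l + xI ρ.1.1 l)
    (fun i hi => by
      have hcls : net.cls i = l := mem_classSet.1 hi
      rw [mem_nePr net θv hθ i ρ]
      unfold posOf
      rw [hcls])
    0 (aI ρ.1.1 l + xI ρ.1.1 l)
    (fun m _ => by omega) (by omega)
  rw [this]
  omega

lemma cnt_opt_class (l : Fin k) (ρ : RT net) :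
    (ConsGame net θv hθ).cnt (optPr net θv hθ) (net.classSet l) ((eRes net) ρ)
      = bI ρ.1.1 l + xI ρ.1.1 l := by
  have hbound := (mem_Iset_iff.1 ρ.1.2).1 l
  have := cnt_class_cons net θv hθ (optPr net θv hθ) l ((eRes net) ρ) (ρ.2 l)
    (fun m => aI ρ.1.1 l ≤ m ∧ m < aI ρ.1.1 l + xI ρ.1.1 l + bI ρ.1.1 l)
    (fun i hi => by
      have hcls : net.cls i = l := mem_classSet.1 hi
      rw [mem_optPr net θv hθ i ρ]
      unfold posOf
      rw [hcls])
    (aI ρ.1.1 l) (aI ρ.1.1 l + xI ρ.1.1 l + bI ρ.1.1 l)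
    (fun m _ => by omega) (by omega)
  rw [this]
  omega

lemma cnt_ne_univ (ρ : RT net) :
    (ConsGame net θv hθ).cnt (nePr net θv hθ) Finset.univ ((eRes net) ρ) = AtI ρ.1.1 := by
  rw [cnt_univ_eq_sum (ConsGame net θv hθ) net]
  exact Finset.sum_congr rfl fun l _ => cnt_ne_class net θv hθ l ρ

lemma cnt_opt_univ (ρ : RT net) :
    (ConsGame net θv hθ).cnt (optPr net θv hθ) Finset.univ ((eRes net) ρ) = BtI ρ.1.1 := by
  rw [cnt_univ_eq_sum (ConsGame net θv hθ) net]
  exact Finset.sum_congr rfl fun l _ => cnt_opt_class net θv hθ l ρ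

lemma cnt_ne_Nb (j : Fin k) (ρ : RT net) :
    (ConsGame net θv hθ).cnt (nePr net θv hθ) (net.Nb j) ((eRes net) ρ) = Atj net ρ.1.1 j := by
  rw [cnt_Nb_eq_sum (ConsGame net θv hθ) net]
  exact Finset.sum_congr rfl fun l _ => cnt_ne_class net θv hθ l ρ

end Cons
end
end PoAAux
namespace PoAAux
open Finset
noncomputable section

variable {n k : ℕ}

section Cons2

variable (net : Network n k) (θv : Tsub net → ℝ) (hθ : ∀ t, 0 ≤ θv t)

lemma v_cons (ρ : RT net) : (ConsGame net θv hθ).v ((eRes net) ρ) = θv ρ.1 := by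
  show θv ((eRes net).symm ((eRes net) ρ)).1 = θv ρ.1
  rw [Equiv.symm_apply_apply]

lemma welf_ne_cons (w : ℕ → ℝ) :
    (ConsGame net θv hθ).welf w (nePr net θv hθ)
      = (Fintype.card (Shift net) : ℝ)
        * ∑ t ∈ (Iset n k net.κ).attach, w (AtI t.1) * θv t := by
  refine Eq.trans ((Equiv.sum_comp (eRes net) (fun r => (ConsGame net θv hθ).v r
    * w ((ConsGame net θv hθ).cnt (nePr net θv hθ) Finset.univ r))).symm) ?_
  have h1 : ∀ ρ : RT net, (ConsGame net θv hθ).v ((eRes net) ρ)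
      * w ((ConsGame net θv hθ).cnt (nePr net θv hθ) Finset.univ ((eRes net) ρ))
      = θv ρ.1 * w (AtI ρ.1.1) := by
    intro ρ
    rw [cnt_ne_univ net θv hθ ρ, v_cons]
  rw [Finset.sum_congr rfl fun ρ _ => h1 ρ, Fintype.sum_prod_type]
  rw [Finset.sum_congr rfl fun t (_ : t ∈ Finset.univ) =>
    Finset.sum_const (θv t * w (AtI t.1))]
  rw [← Finset.smul_sum, Finset.univ_eq_attach, nsmul_eq_mul]
  congr 1
  exact Finset.sum_congr rfl fun t _ => mul_comm _ _

lemma welf_opt_cons (w : ℕ → ℝ) :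
    (ConsGame net θv hθ).welf w (optPr net θv hθ)
      = (Fintype.card (Shift net) : ℝ)
        * ∑ t ∈ (Iset n k net.κ).attach, w (BtI t.1) * θv t := by
  refine Eq.trans ((Equiv.sum_comp (eRes net) (fun r => (ConsGame net θv hθ).v r
    * w ((ConsGame net θv hθ).cnt (optPr net θv hθ) Finset.univ r))).symm) ?_
  have h1 : ∀ ρ : RT net, (ConsGame net θv hθ).v ((eRes net) ρ)
      * w ((ConsGame net θv hθ).cnt (optPr net θv hθ) Finset.univ ((eRes net) ρ))
      = θv ρ.1 * w (BtI ρ.1.1) := by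
    intro ρ
    rw [cnt_opt_univ net θv hθ ρ, v_cons]
  rw [Finset.sum_congr rfl fun ρ _ => h1 ρ, Fintype.sum_prod_type]
  rw [Finset.sum_congr rfl fun t (_ : t ∈ Finset.univ) =>
    Finset.sum_const (θv t * w (BtI t.1))]
  rw [← Finset.smul_sum, Finset.univ_eq_attach, nsmul_eq_mul]
  congr 1
  exact Finset.sum_congr rfl fun t _ => mul_comm _ _

/-- evaluation of shifted-interval sums over the resources of the constructed game -/
lemma part_eval (i : Fin n) (g : Tsub net → ℝ)
    (P : Idx n k → ℕ → Prop) [∀ t m, Decidable (P t m)] (lo hi : Idx n k → ℕ)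
    (hiff : ∀ t : Tsub net, ∀ m, m < net.κ (net.cls i) →
      (P t.1 m ↔ lo t.1 ≤ m ∧ m < hi t.1))
    (hhi : ∀ t : Tsub net, hi t.1 ≤ net.κ (net.cls i)) :
    ∑ ρ : RT net, (if P ρ.1.1 (posOf net ρ.2 i) then g ρ.1 else 0)
      = (Fintype.card (∀ l : {l // l ≠ net.cls i}, Fin (net.κ l)) : ℝ)
        * ∑ t ∈ (Iset n k net.κ).attach, ((hi t.1 - lo t.1 : ℕ) : ℝ) * g t := by
  haveI : NeZero (net.κ (net.cls i)) := ⟨by have := κ_pos net (net.cls i); omega⟩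
  rw [Fintype.sum_prod_type]
  have inner : ∀ t : Tsub net, (∑ s : Shift net, if P t.1 (posOf net s i) then g t else 0)
      = (Fintype.card (∀ l : {l // l ≠ net.cls i}, Fin (net.κ l)) : ℝ)
        * (((hi t.1 - lo t.1 : ℕ) : ℝ) * g t) := by
    intro t
    have step1 : (∑ s : Shift net, if P t.1 (posOf net s i) then g t else 0)
        = ∑ s : Shift net, (fun q : Fin (net.κ (net.cls i)) =>
            if P t.1 ((rk net i + (net.κ (net.cls i) - (q : ℕ))) % net.κ (net.cls i))
            then g t else 0) (s (net.cls i)) :=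
      Finset.sum_congr rfl (fun s _ => rfl)
    refine step1.trans (Eq.trans (sum_eval (β := fun l => Fin (net.κ l)) (net.cls i)
      (fun q : Fin (net.κ (net.cls i)) =>
        if P t.1 ((rk net i + (net.κ (net.cls i) - (q : ℕ))) % net.κ (net.cls i))
        then g t else 0)) ?_)
    congr 1
    rw [sum_ite_count]
    rw [Finset.filter_congr (fun q (_ : q ∈ Finset.univ) =>
      hiff t _ (Nat.mod_lt _ (by have := κ_pos net (net.cls i); omega)))]
    rw [card_filter_shift_left (net.κ (net.cls i)) (rk net i) (rk_lt net i)
      (lo t.1) (hi t.1) (hhi t)]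
  rw [Finset.sum_congr rfl fun t (_ : t ∈ Finset.univ) => inner t]
  rw [← Finset.mul_sum, Finset.univ_eq_attach]

lemma cons_profile_ne : (ConsGame net θv hθ).IsProfile (nePr net θv hθ) :=
  fun _ => Finset.mem_insert_self _ _

lemma cons_profile_opt : (ConsGame net θv hθ).IsProfile (optPr net θv hθ) := by
  intro i
  exact Finset.mem_insert_of_mem (Finset.mem_singleton_self _)

lemma cons_nash (w : ℕ → ℝ) (f : Fin k → ℕ → ℝ)
    (hfeas : PrimalFeasible n k net w f θv) :
    (ConsGame net θv hθ).IsNash net f (nePr net θv hθ) := by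
  classical
  refine ⟨cons_profile_ne net θv hθ, ?_⟩
  intro i b hb
  rcases Finset.mem_insert.1 hb with h | h
  · have hbne : b = nePr net θv hθ i := h
    rw [hbne, Function.update_eq_self]
  · have hbopt : b = optPr net θv hθ i := Finset.mem_singleton.1 h
    subst hbopt
    have key := util_sub (ConsGame net θv hθ) net f (nePr net θv hθ) i (optPr net θv hθ i)
    have hset1 : nePr net θv hθ i \ optPr net θv hθ i
        = Finset.univ.filter (fun r =>
            r ∈ nePr net θv hθ i ∧ r ∉ optPr net θv hθ i) := by
      ext r
      simp [Finset.mem_sdiff]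
    have hset2 : optPr net θv hθ i \ nePr net θv hθ i
        = Finset.univ.filter (fun r =>
            r ∈ optPr net θv hθ i ∧ r ∉ nePr net θv hθ i) := by
      ext r
      simp [Finset.mem_sdiff]
    have hconv1 : ∀ ρ : RT net,
        (if (eRes net) ρ ∈ nePr net θv hθ i ∧ (eRes net) ρ ∉ optPr net θv hθ i
          then (ConsGame net θv hθ).v ((eRes net) ρ) * f (net.cls i)
            ((ConsGame net θv hθ).cnt (nePr net θv hθ) (net.Nb (net.cls i)) ((eRes net) ρ))
          else 0)
        = (if (posOf net ρ.2 i < aI ρ.1.1 (net.cls i) + xI ρ.1.1 (net.cls i)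
              ∧ ¬ (aI ρ.1.1 (net.cls i) ≤ posOf net ρ.2 i ∧
                posOf net ρ.2 i < aI ρ.1.1 (net.cls i) + xI ρ.1.1 (net.cls i)
                  + bI ρ.1.1 (net.cls i)))
            then θv ρ.1 * f (net.cls i) (Atj net ρ.1.1 (net.cls i)) else 0) := by
      intro ρ
      rw [cnt_ne_Nb net θv hθ (net.cls i) ρ, v_cons]
      congr 1
      rw [eq_iff_iff, mem_nePr net θv hθ i ρ, mem_optPr net θv hθ i ρ]
    have hconv2 : ∀ ρ : RT net,
        (if (eRes net) ρ ∈ optPr net θv hθ i ∧ (eRes net) ρ ∉ nePr net θv hθ i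
          then (ConsGame net θv hθ).v ((eRes net) ρ) * f (net.cls i)
            ((ConsGame net θv hθ).cnt (nePr net θv hθ) (net.Nb (net.cls i)) ((eRes net) ρ) + 1)
          else 0)
        = (if ((aI ρ.1.1 (net.cls i) ≤ posOf net ρ.2 i ∧
                posOf net ρ.2 i < aI ρ.1.1 (net.cls i) + xI ρ.1.1 (net.cls i)
                  + bI ρ.1.1 (net.cls i))
              ∧ ¬ posOf net ρ.2 i < aI ρ.1.1 (net.cls i) + xI ρ.1.1 (net.cls i))
            then θv ρ.1 * f (net.cls i) (Atj net ρ.1.1 (net.cls i) + 1) else 0) := by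
      intro ρ
      rw [cnt_ne_Nb net θv hθ (net.cls i) ρ, v_cons]
      congr 1
      rw [eq_iff_iff, mem_nePr net θv hθ i ρ, mem_optPr net θv hθ i ρ]
    have E1 : ∑ r ∈ nePr net θv hθ i \ optPr net θv hθ i,
        (ConsGame net θv hθ).v r * f (net.cls i)
          ((ConsGame net θv hθ).cnt (nePr net θv hθ) (net.Nb (net.cls i)) r)
        = (Fintype.card (∀ l : {l // l ≠ net.cls i}, Fin (net.κ l)) : ℝ)
          * ∑ t ∈ (Iset n k net.κ).attach,
              ((aI t.1 (net.cls i) - 0 : ℕ) : ℝ)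
                * (θv t * f (net.cls i) (Atj net t.1 (net.cls i))) := by
      rw [hset1, Finset.sum_filter]
      refine Eq.trans ((Equiv.sum_comp (eRes net) (fun r =>
        if r ∈ nePr net θv hθ i ∧ r ∉ optPr net θv hθ i
        then (ConsGame net θv hθ).v r * f (net.cls i)
          ((ConsGame net θv hθ).cnt (nePr net θv hθ) (net.Nb (net.cls i)) r)
        else 0)).symm) ?_
      refine Eq.trans (Finset.sum_congr rfl fun ρ _ => hconv1 ρ) ?_
      exact part_eval net i
        (fun t => θv t * f (net.cls i) (Atj net t.1 (net.cls i)))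
        (fun t m => m < aI t (net.cls i) + xI t (net.cls i)
          ∧ ¬ (aI t (net.cls i) ≤ m ∧ m < aI t (net.cls i) + xI t (net.cls i)
            + bI t (net.cls i)))
        (fun _ => 0) (fun t => aI t (net.cls i))
        (fun t m _ => by omega)
        (fun t => by have := (mem_Iset_iff.1 t.2).1 (net.cls i); omega)
    have E2 : ∑ r ∈ optPr net θv hθ i \ nePr net θv hθ i,
        (ConsGame net θv hθ).v r * f (net.cls i)
          ((ConsGame net θv hθ).cnt (nePr net θv hθ) (net.Nb (net.cls i)) r + 1)
        = (Fintype.card (∀ l : {l // l ≠ net.cls i}, Fin (net.κ l)) : ℝ)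
          * ∑ t ∈ (Iset n k net.κ).attach,
              ((aI t.1 (net.cls i) + xI t.1 (net.cls i) + bI t.1 (net.cls i)
                - (aI t.1 (net.cls i) + xI t.1 (net.cls i)) : ℕ) : ℝ)
                * (θv t * f (net.cls i) (Atj net t.1 (net.cls i) + 1)) := by
      rw [hset2, Finset.sum_filter]
      refine Eq.trans ((Equiv.sum_comp (eRes net) (fun r =>
        if r ∈ optPr net θv hθ i ∧ r ∉ nePr net θv hθ i
        then (ConsGame net θv hθ).v r * f (net.cls i)
          ((ConsGame net θv hθ).cnt (nePr net θv hθ) (net.Nb (net.cls i)) r + 1)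
        else 0)).symm) ?_
      refine Eq.trans (Finset.sum_congr rfl fun ρ _ => hconv2 ρ) ?_
      exact part_eval net i
        (fun t => θv t * f (net.cls i) (Atj net t.1 (net.cls i) + 1))
        (fun t m => (aI t (net.cls i) ≤ m ∧ m < aI t (net.cls i) + xI t (net.cls i)
            + bI t (net.cls i)) ∧ ¬ m < aI t (net.cls i) + xI t (net.cls i))
        (fun t => aI t (net.cls i) + xI t (net.cls i))
        (fun t => aI t (net.cls i) + xI t (net.cls i) + bI t (net.cls i))
        (fun t m _ => by omega)
        (fun t => by have := (mem_Iset_iff.1 t.2).1 (net.cls i); omega)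
    have hsuff : 0 ≤ (ConsGame net θv hθ).util net f (nePr net θv hθ) i
        - (ConsGame net θv hθ).util net f
            (Function.update (nePr net θv hθ) i (optPr net θv hθ i)) i := by
      rw [key, E1, E2, ← mul_sub]
      apply mul_nonneg (Nat.cast_nonneg _)
      rw [← Finset.sum_sub_distrib]
      have hcon := hfeas.2.1 (net.cls i)
      have heq2 : ∀ t ∈ (Iset n k net.κ).attach,
          ((aI t.1 (net.cls i) - 0 : ℕ) : ℝ)
              * (θv t * f (net.cls i) (Atj net t.1 (net.cls i)))
            - ((aI t.1 (net.cls i) + xI t.1 (net.cls i) + bI t.1 (net.cls i)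
                - (aI t.1 (net.cls i) + xI t.1 (net.cls i)) : ℕ) : ℝ)
              * (θv t * f (net.cls i) (Atj net t.1 (net.cls i) + 1))
          = ((aI t.1 (net.cls i) : ℝ) * f (net.cls i) (Atj net t.1 (net.cls i))
              - (bI t.1 (net.cls i) : ℝ) * f (net.cls i) (Atj net t.1 (net.cls i) + 1))
            * θv t := by
        intro t _
        have e1 : (aI t.1 (net.cls i) - 0 : ℕ) = aI t.1 (net.cls i) := by omega
        have e2 : (aI t.1 (net.cls i) + xI t.1 (net.cls i) + bI t.1 (net.cls i)
            - (aI t.1 (net.cls i) + xI t.1 (net.cls i)) : ℕ) = bI t.1 (net.cls i) := by omega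
        rw [e1, e2]
        ring
      rw [Finset.sum_congr rfl heq2]
      exact hcon
    linarith

end Cons2
end
end PoAAux
namespace PoAAux
open Finset
noncomputable section

variable {n k : ℕ}

lemma div_div_self' {a b : ℝ} (ha : a ≠ 0) : (a / b) / a = 1 / b := by
  rw [div_div, mul_comm, ← div_div, div_self ha]

/-- generic upper bound on the ratio of a game -/
lemma gameRatio_le (G : RAGame n) (w : ℕ → ℝ) (hw : IsBasis n w) (net : Network n k)
    (f : Fin k → ℕ → ℝ) {ane aopt : Fin n → Finset (Fin G.m)}
    (hNash : G.IsNash net f ane) (hProf : G.IsProfile aopt) (hpos : 0 < G.welf w aopt) :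
    gameRatio G w net f ≤ G.welf w ane / G.welf w aopt := by
  unfold gameRatio
  have hNbb : BddBelow {x | ∃ a, G.IsNash net f a ∧ x = G.welf w a} := by
    refine ⟨0, ?_⟩
    rintro x ⟨a, _, rfl⟩
    exact welf_nonneg hw a
  have hInf_le : sInf {x | ∃ a, G.IsNash net f a ∧ x = G.welf w a} ≤ G.welf w ane :=
    csInf_le hNbb ⟨ane, hNash, rfl⟩
  have hInf_nn : 0 ≤ sInf {x | ∃ a, G.IsNash net f a ∧ x = G.welf w a} :=
    le_csInf ⟨G.welf w ane, ane, hNash, rfl⟩ (by rintro x ⟨a, _, rfl⟩; exact welf_nonneg hw a)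
  have hPfin : {x | ∃ a, G.IsProfile a ∧ x = G.welf w a}.Finite := by
    apply (Set.finite_range (G.welf w)).subset
    rintro x ⟨a, _, rfl⟩
    exact ⟨a, rfl⟩
  have hPa : BddAbove {x | ∃ a, G.IsProfile a ∧ x = G.welf w a} := hPfin.bddAbove
  have hSup_ge : G.welf w aopt ≤ sSup {x | ∃ a, G.IsProfile a ∧ x = G.welf w a} :=
    le_csSup hPa ⟨aopt, hProf, rfl⟩
  exact div_le_div₀ (welf_nonneg hw ane) hInf_le hpos hSup_ge

/-- generic lower bound on the ratio of any good game with an equilibrium -/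
lemma gameRatio_ge (hn : 1 ≤ n) (w : ℕ → ℝ) (hw : IsBasis n w) (net : Network n k)
    (f : Fin k → ℕ → ℝ) (hfpos : ∀ j, 0 < f j 1) (G : RAGame n) (hGood : GoodGame G w)
    (hNash : ∃ a, G.IsNash net f a) :
    1 / sSup (PrimalVals n k net w f) ≤ gameRatio G w net f := by
  have hbdd := bddAbove_PrimalVals w hw net f hfpos
  set Ws := sSup (PrimalVals n k net w f) with hWs
  have hW1 : (1:ℝ) ≤ Ws := le_csSup hbdd (one_mem_PrimalVals hn w hw net f)
  have hWpos : (0:ℝ) < Ws := by linarith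
  unfold gameRatio
  obtain ⟨a0, ha0, hwa0⟩ := hGood
  have hPne : {x | ∃ a, G.IsProfile a ∧ x = G.welf w a}.Nonempty := ⟨_, a0, ha0, rfl⟩
  have hPfin : {x | ∃ a, G.IsProfile a ∧ x = G.welf w a}.Finite := by
    apply (Set.finite_range (G.welf w)).subset
    rintro x ⟨a, _, rfl⟩
    exact ⟨a, rfl⟩
  have hPa : BddAbove {x | ∃ a, G.IsProfile a ∧ x = G.welf w a} := hPfin.bddAbove
  have hSupPos : 0 < sSup {x | ∃ a, G.IsProfile a ∧ x = G.welf w a} :=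
    lt_of_lt_of_le hwa0 (le_csSup hPa ⟨a0, ha0, rfl⟩)
  -- every Nash welfare dominates sSup P / Ws
  have hkey : ∀ y ∈ {x | ∃ a, G.IsNash net f a ∧ x = G.welf w a},
      sSup {x | ∃ a, G.IsProfile a ∧ x = G.welf w a} / Ws ≤ y := by
    rintro y ⟨ane, hane, rfl⟩
    have hne_pos : 0 < G.welf w ane := nash_welf_pos hw hfpos hane ⟨a0, ha0, hwa0⟩
    have hdom : ∀ x ∈ {x | ∃ a, G.IsProfile a ∧ x = G.welf w a}, x ≤ Ws * G.welf w ane := by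
      rintro x ⟨aopt, haopt, rfl⟩
      have hmem := ratio_mem_PrimalVals G net w hw f hane haopt hne_pos
      have := le_csSup hbdd hmem
      rw [div_le_iff₀ hne_pos] at this
      linarith [this]
    have := csSup_le hPne hdom
    rw [div_le_iff₀ hWpos]
    linarith [this, mul_comm Ws (G.welf w ane)]
  have hNne : {x | ∃ a, G.IsNash net f a ∧ x = G.welf w a}.Nonempty := by
    obtain ⟨a, ha⟩ := hNash
    exact ⟨_, a, ha, rfl⟩
  have hInf : sSup {x | ∃ a, G.IsProfile a ∧ x = G.welf w a} / Ws
      ≤ sInf {x | ∃ a, G.IsNash net f a ∧ x = G.welf w a} := le_csInf hNne hkey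
  calc 1 / Ws
      = (sSup {x | ∃ a, G.IsProfile a ∧ x = G.welf w a} / Ws)
          / sSup {x | ∃ a, G.IsProfile a ∧ x = G.welf w a} :=
        (div_div_self' (ne_of_gt hSupPos)).symm
    _ ≤ sInf {x | ∃ a, G.IsNash net f a ∧ x = G.welf w a}
          / sSup {x | ∃ a, G.IsProfile a ∧ x = G.welf w a} := by
        gcongr

/-- existence of an optimal primal solution -/
lemma exists_opt (hn : 1 ≤ n) (w : ℕ → ℝ) (hw : IsBasis n w) (net : Network n k)
    (f : Fin k → ℕ → ℝ) (hfpos : ∀ j, 0 < f j 1) :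
    ∃ θ : Tsub net → ℝ, PrimalFeasible n k net w f θ
      ∧ primalObj n k net.κ w θ = sSup (PrimalVals n k net w f) := by
  classical
  obtain ⟨θ0, hθ0, _⟩ := one_mem_PrimalVals hn w hw net f
  obtain ⟨M, hM⟩ := exists_uniform_bound w hw net f hfpos
  set S : Set (Tsub net → ℝ) := {θ | PrimalFeasible n k net w f θ} with hS
  have hSne : S.Nonempty := ⟨θ0, hθ0⟩
  have hsub : S ⊆ Set.univ.pi (fun _ : Tsub net => Set.Icc (0:ℝ) (max M 0)) := by
    intro θ hθ t _
    exact ⟨hθ.1 t, le_trans (hM θ hθ t) (le_max_left _ _)⟩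
  have hbox : IsCompact (Set.univ.pi (fun _ : Tsub net => Set.Icc (0:ℝ) (max M 0))) :=
    isCompact_univ_pi (fun _ => isCompact_Icc)
  have hclosed : IsClosed S := by
    have hrep : S = (⋂ t : Tsub net, {θ : Tsub net → ℝ | 0 ≤ θ t})
        ∩ ((⋂ j : Fin k, {θ : Tsub net → ℝ | 0 ≤ ∑ t ∈ (Iset n k net.κ).attach,
              ((aI t.1 j : ℝ) * f j (Atj net t.1 j)
                - (bI t.1 j : ℝ) * f j (Atj net t.1 j + 1)) * θ t})
          ∩ {θ : Tsub net → ℝ | ∑ t ∈ (Iset n k net.κ).attach, w (AtI t.1) * θ t = 1}) := by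
      ext θ
      simp only [Set.mem_inter_iff, Set.mem_iInter, Set.mem_setOf_eq]
      exact ⟨fun h => ⟨h.1, h.2.1, h.2.2⟩, fun h => ⟨h.1, h.2.1, h.2.2⟩⟩
    rw [hrep]
    refine IsClosed.inter (isClosed_iInter fun t =>
      isClosed_le continuous_const (continuous_apply t)) (IsClosed.inter ?_ ?_)
    · refine isClosed_iInter fun j => isClosed_le continuous_const ?_
      exact continuous_finset_sum _ fun t _ => (continuous_const).mul (continuous_apply t)
    · exact isClosed_eq
        (continuous_finset_sum _ fun t _ => (continuous_const).mul (continuous_apply t))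
        continuous_const
  have hScomp : IsCompact S := hbox.of_isClosed_subset hclosed hsub
  have hcont : ContinuousOn (primalObj n k net.κ w) S :=
    (continuous_finset_sum _ fun t _ => (continuous_const).mul (continuous_apply t)).continuousOn
  obtain ⟨θs, hθsS, hmax⟩ := hScomp.exists_isMaxOn hSne hcont
  refine ⟨θs, hθsS, ?_⟩
  have hgreat : IsGreatest (PrimalVals n k net w f) (primalObj n k net.κ w θs) := by
    constructor
    · exact ⟨θs, hθsS, rfl⟩
    · rintro x ⟨θ, hθ, rfl⟩
      exact hmax hθ
  exact hgreat.csSup_eq.symm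

end
end PoAAux
/-- Theorem 1: if `f_j(1) > 0` for all `j`, the primal LP value `W*` is finite
and `PoA = 1/W*`. -/
theorem poa_eq_inv_primal {n k : ℕ} (hn : 1 ≤ n) (w : ℕ → ℝ) (hw : IsBasis n w)
    (net : Network n k) (f : Fin k → ℕ → ℝ) (hf : IsMech net f)
    (hfpos : ∀ j, 0 < f j 1) :
    (PrimalVals n k net w f).Nonempty ∧ BddAbove (PrimalVals n k net w f) ∧
      PoA n w net f = 1 / sSup (PrimalVals n k net w f) := by
  classical
  have hbdd := PoAAux.bddAbove_PrimalVals w hw net f hfpos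
  have hone := PoAAux.one_mem_PrimalVals hn w hw net f
  refine ⟨⟨1, hone⟩, hbdd, ?_⟩
  have hW1 : (1:ℝ) ≤ sSup (PrimalVals n k net w f) := le_csSup hbdd hone
  have hWpos : (0:ℝ) < sSup (PrimalVals n k net w f) := by linarith
  obtain ⟨θs, hfeas, hobj⟩ := PoAAux.exists_opt hn w hw net f hfpos
  have hK1 : (1:ℝ) ≤ (Fintype.card (PoAAux.Shift net) : ℝ) := by
    have := Fintype.card_pos (α := PoAAux.Shift net)
    exact_mod_cast this
  have hKne : (Fintype.card (PoAAux.Shift net) : ℝ) ≠ 0 := by linarith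
  have hwelfne : (PoAAux.ConsGame net θs hfeas.1).welf w (PoAAux.nePr net θs hfeas.1)
      = (Fintype.card (PoAAux.Shift net) : ℝ) := by
    rw [PoAAux.welf_ne_cons net θs hfeas.1 w, hfeas.2.2, mul_one]
  have hwelfopt : (PoAAux.ConsGame net θs hfeas.1).welf w (PoAAux.optPr net θs hfeas.1)
      = (Fintype.card (PoAAux.Shift net) : ℝ) * sSup (PrimalVals n k net w f) := by
    rw [PoAAux.welf_opt_cons net θs hfeas.1 w, ← hobj]
    rfl
  have hGood : GoodGame (PoAAux.ConsGame net θs hfeas.1) w :=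
    ⟨_, PoAAux.cons_profile_ne net θs hfeas.1, by rw [hwelfne]; linarith⟩
  have hNash := PoAAux.cons_nash net θs hfeas.1 w f hfeas
  have hoptpos : 0 < (PoAAux.ConsGame net θs hfeas.1).welf w (PoAAux.optPr net θs hfeas.1) := by
    rw [hwelfopt]
    nlinarith
  have hratio : gameRatio (PoAAux.ConsGame net θs hfeas.1) w net f
      ≤ 1 / sSup (PrimalVals n k net w f) := by
    have h1 := PoAAux.gameRatio_le (PoAAux.ConsGame net θs hfeas.1) w hw net f hNash
      (PoAAux.cons_profile_opt net θs hfeas.1) hoptpos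
    have h2 : (PoAAux.ConsGame net θs hfeas.1).welf w (PoAAux.nePr net θs hfeas.1)
        / (PoAAux.ConsGame net θs hfeas.1).welf w (PoAAux.optPr net θs hfeas.1)
        = 1 / sSup (PrimalVals n k net w f) := by
      rw [hwelfne, hwelfopt, ← div_div, div_self hKne]
    linarith
  have hmem : gameRatio (PoAAux.ConsGame net θs hfeas.1) w net f
      ∈ {q | ∃ G : RAGame n, GoodGame G w ∧ (∃ a, G.IsNash net f a) ∧
          q = gameRatio G w net f} :=
    ⟨_, hGood, ⟨_, hNash⟩, rfl⟩
  unfold PoA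
  apply le_antisymm
  · refine le_trans (csInf_le ⟨1 / sSup (PrimalVals n k net w f), ?_⟩ hmem) hratio
    rintro q ⟨G, hG, hN, rfl⟩
    exact PoAAux.gameRatio_ge hn w hw net f hfpos G hG hN
  · refine le_csInf ⟨_, hmem⟩ ?_
    rintro q ⟨G, hG, hN, rfl⟩
    exact PoAAux.gameRatio_ge hn w hw net f hfpos G hG hN
end

section
/- Suppose f_j(1) > 0 for every j ∈ {1,…,k}. Then the feasible set of the primal LP (the set of θ : 𝓘 → ℝ with θ(t) ≥ 0, Σ_{t∈𝓘} [a_j f_j(A_{t,j}) − b_j f_j(A_{t,j}+1)] θ(t) ≥ 0 for every j, and Σ_{t∈𝓘} w(A_t) θ(t) = 1) is nonempty and compact; in particular the supremum W* of Σ_{t∈𝓘} w(B_t) θ(t) over this set is finite and attained. -/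
open Finset

/-- auxiliary: the coefficient of the `j`-th primal constraint at index `t` -/
noncomputable def cjAux {n k : ℕ} (net : Network n k) (f : Fin k → ℕ → ℝ) (j : Fin k) (t : Idx n k) : ℝ :=
  (aI t j : ℝ) * f j (Atj net t j) - (bI t j : ℝ) * f j (Atj net t j + 1)

/-- auxiliary: combined coefficient used to bound the primal feasible set -/
noncomputable def gAux {n k : ℕ} (net : Network n k) (f : Fin k → ℕ → ℝ) (w : ℕ → ℝ) (ε : ℝ)
    (t : Idx n k) : ℝ :=
  w (AtI t) - ∑ j, ε * cjAux net f j t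

/-- if `f_j(1) > 0` for all `j`, the primal feasible set is nonempty and compact;
in particular the supremum `W*` of the LP objective is finite and attained. -/

theorem primal_feasible_compact {n k : ℕ} (hn : 1 ≤ n) (w : ℕ → ℝ) (hw : IsBasis n w)
    (net : Network n k) (f : Fin k → ℕ → ℝ) (hf : IsMech net f)
    (hfpos : ∀ j, 0 < f j 1) :
    {θ | PrimalFeasible n k net w f θ}.Nonempty ∧
    IsCompact {θ | PrimalFeasible n k net w f θ} ∧
    ∃ θ₀, PrimalFeasible n k net w f θ₀ ∧
      (∀ θ, PrimalFeasible n k net w f θ →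
        primalObj n k net.κ w θ ≤ primalObj n k net.κ w θ₀) ∧
      sSup (PrimalVals n k net w f) = primalObj n k net.κ w θ₀ := by
  classical
  have hw0 : w 0 = 0 := hw.1
  have hw1 : 0 < w 1 := hw.2 1 le_rfl hn
  -- every class is nonempty
  have hκ : ∀ j, 1 ≤ net.κ j := by
    intro j
    obtain ⟨i, hi⟩ := net.cls_surj j
    exact Finset.card_pos.mpr ⟨i, by simp [Network.classSet, hi]⟩
  -- each class is contained in its observed set
  have hsubNb : ∀ j, net.classSet j ⊆ net.Nb j := by
    intro j i hi
    obtain ⟨i0, hi0⟩ := net.cls_surj j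
    have hi' : net.cls i = j := by simpa [Network.classSet] using hi
    exact net.Nb_union j i0 i (by rw [hi0, hi']) (by simpa [hi0] using net.mem_Nb i0)
  set j₀ : Fin k := net.cls ⟨0, hn⟩ with hj₀
  -- the witness index: a_{j₀} = 1, everything else 0
  set t0 : Idx n k := fun j => if j = j₀ then (⟨1, by omega⟩, 0, 0) else (0, 0, 0) with ht0def
  have ha0 : ∀ j, aI t0 j = if j = j₀ then 1 else 0 := by
    intro j; by_cases h : j = j₀ <;> simp [aI, t0, h]
  have hx0 : ∀ j, xI t0 j = 0 := by
    intro j; by_cases h : j = j₀ <;> simp [xI, t0, h]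
  have hb0 : ∀ j, bI t0 j = 0 := by
    intro j; by_cases h : j = j₀ <;> simp [bI, t0, h]
  have hsum_axb : ∑ j, (aI t0 j + xI t0 j + bI t0 j) = 1 := by
    simp [ha0, hx0, hb0]
  have ht0 : t0 ∈ Iset n k net.κ := by
    simp only [Iset, Finset.mem_filter, Finset.mem_univ, true_and]
    refine ⟨fun j => ?_, by omega, by omega⟩
    rcases eq_or_ne j j₀ with h | h
    · subst h; have := hκ j₀; simp [ha0, hx0, hb0]; omega
    · simp [ha0, hx0, hb0, h]
  have hA0 : AtI t0 = 1 := by simp [AtI, ha0, hx0]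
  have hj₀mem : j₀ ∈ Finset.univ.filter (fun l => net.classSet l ⊆ net.Nb j₀) := by
    simp [hsubNb j₀]
  have hAtj0 : Atj net t0 j₀ = 1 := by
    rw [Atj]
    rw [Finset.sum_congr rfl (fun l _ => by rw [ha0 l, hx0 l])]
    simp [Finset.sum_ite_eq', hsubNb j₀]
  -- the witness feasible point
  set θ₀ : {t : Idx n k // t ∈ Iset n k net.κ} → ℝ :=
    fun t => if t.1 = t0 then (w 1)⁻¹ else 0 with hθ₀def
  have hsum0 : ∀ c : Idx n k → ℝ,
      ∑ t ∈ (Iset n k net.κ).attach, c t.1 * θ₀ t = c t0 * (w 1)⁻¹ := by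
    intro c
    rw [Finset.sum_eq_single (⟨t0, ht0⟩ : {t : Idx n k // t ∈ Iset n k net.κ})]
    · simp [θ₀]
    · intro b _ hb
      have hb' : b.1 ≠ t0 := fun h => hb (Subtype.ext h)
      simp [θ₀, hb']
    · intro h; exact absurd (Finset.mem_attach _ _) h
  have hfeas0 : PrimalFeasible n k net w f θ₀ := by
    refine ⟨fun t => ?_, fun j => ?_, ?_⟩
    · dsimp only [θ₀]; split
      · positivity
      · exact le_rfl
    · rw [hsum0 (fun t => (aI t j : ℝ) * f j (Atj net t j) - (bI t j : ℝ) * f j (Atj net t j + 1))]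
      rcases eq_or_ne j j₀ with h | h
      · subst h
        rw [ha0 j₀, hb0 j₀, hAtj0, if_pos rfl]
        have hf1 := hfpos j₀
        have hkey : (0:ℝ) ≤ f j₀ 1 * (w 1)⁻¹ := by positivity
        simpa using hkey
      · rw [ha0 j, hb0 j, if_neg h]
        simp
    · rw [hsum0 (fun t => w (AtI t))]
      rw [hA0]
      exact mul_inv_cancel₀ hw1.ne'
  have hIne : (Iset n k net.κ).Nonempty := ⟨t0, ht0⟩
  -- basic bounds on indices in 𝓘
  have hAle : ∀ t ∈ Iset n k net.κ, AtI t ≤ n := by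
    intro t ht
    simp only [Iset, Finset.mem_filter] at ht
    calc AtI t ≤ ∑ j, (aI t j + xI t j + bI t j) :=
          Finset.sum_le_sum (fun j _ => by omega)
      _ ≤ n := ht.2.2.2
  -- the uniform bound construction
  set Cmax : ℝ := (Iset n k net.κ).sup' hIne (fun t => |∑ j, cjAux net f j t|) with hCmax
  have hCub : ∀ t ∈ Iset n k net.κ, ∑ j, cjAux net f j t ≤ Cmax := by
    intro t ht
    rw [hCmax]
    exact le_trans (le_abs_self _) (Finset.le_sup' (fun t => |∑ j, cjAux net f j t|) ht)
  have hC0 : (0:ℝ) ≤ Cmax := by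
    rw [hCmax]
    exact le_trans (abs_nonneg _) (Finset.le_sup' (fun t => |∑ j, cjAux net f j t|) ht0)
  set P : Finset (Idx n k) := (Iset n k net.κ).filter (fun t => 1 ≤ AtI t) with hP
  have hPt0 : t0 ∈ P := by
    rw [hP, Finset.mem_filter]
    exact ⟨ht0, by omega⟩
  set wmin : ℝ := P.inf' ⟨t0, hPt0⟩ (fun t => w (AtI t)) with hwmin
  have hwmin_le : ∀ t ∈ P, wmin ≤ w (AtI t) := by
    intro t ht
    rw [hwmin]
    exact Finset.inf'_le _ ht
  have hwminpos : 0 < wmin := by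
    rw [hwmin]; refine (Finset.lt_inf'_iff _).2 ?_
    intro t ht
    rw [hP, Finset.mem_filter] at ht
    exact hw.2 _ ht.2 (hAle t ht.1)
  set ε : ℝ := wmin / (2 * (Cmax + 1)) with hε
  have hεpos : 0 < ε := by positivity
  -- positivity of gAux on 𝓘
  have hgpos : ∀ t ∈ Iset n k net.κ, 0 < gAux net f w ε t := by
    intro t ht
    rcases Nat.eq_zero_or_pos (AtI t) with hA | hA
    · -- all a, x are zero
      have hax : ∀ j, aI t j + xI t j = 0 := by
        intro j
        have := (Finset.sum_eq_zero_iff).mp hA j (Finset.mem_univ j)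
        omega
      have hAtjz : ∀ j, Atj net t j = 0 :=
        fun j => Finset.sum_eq_zero fun l _ => hax l
      have hcj : ∀ j, cjAux net f j t = -((bI t j : ℝ) * f j 1) := by
        intro j
        have haj : aI t j = 0 := by have := hax j; omega
        simp [cjAux, hAtjz j, haj]
      have hbex : ∃ j, 1 ≤ bI t j := by
        simp only [Iset, Finset.mem_filter] at ht
        by_contra hcon
        push_neg at hcon
        have : ∑ j, (aI t j + xI t j + bI t j) = 0 :=
          Finset.sum_eq_zero fun j _ => by have := hax j; have := hcon j; omega
        omega
      obtain ⟨j₁, hj₁⟩ := hbex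
      have : gAux net f w ε t = ∑ j, ε * ((bI t j : ℝ) * f j 1) := by
        simp only [gAux, hA, hw0]
        rw [Finset.sum_congr rfl (fun j _ => by rw [hcj j])]
        simp
      rw [this]
      apply Finset.sum_pos'
      · intro j _
        have := (hfpos j).le
        positivity
      · refine ⟨j₁, Finset.mem_univ j₁, ?_⟩
        have hb1 : (1:ℝ) ≤ (bI t j₁ : ℝ) := by exact_mod_cast hj₁
        exact mul_pos hεpos (mul_pos (lt_of_lt_of_le one_pos hb1) (hfpos j₁))
    · have htP : t ∈ P := by
        rw [hP, Finset.mem_filter]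
        exact ⟨ht, hA⟩
      have h1 : wmin ≤ w (AtI t) := hwmin_le t htP
      have h2 : ∑ j, ε * cjAux net f j t = ε * ∑ j, cjAux net f j t :=
        (Finset.mul_sum _ _ _).symm
      have h3 : ∑ j, cjAux net f j t ≤ Cmax := hCub t ht
      have h4 : ε * ∑ j, cjAux net f j t ≤ ε * Cmax :=
        mul_le_mul_of_nonneg_left h3 hεpos.le
      have h5 : ε * Cmax < wmin := by
        have : ε * (2 * (Cmax + 1)) = wmin := by
          rw [hε]; field_simp
        nlinarith
      simp only [gAux]
      rw [h2]
      linarith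
  set δ : ℝ := (Iset n k net.κ).inf' hIne (gAux net f w ε) with hδ
  have hδle : ∀ t ∈ Iset n k net.κ, δ ≤ gAux net f w ε t := by
    intro t ht
    rw [hδ]
    exact Finset.inf'_le _ ht
  have hδpos : 0 < δ := by
    rw [hδ, Finset.lt_inf'_iff]
    exact hgpos
  -- the coordinatewise bound for all feasible points
  have key : ∀ θ, PrimalFeasible n k net w f θ → ∀ t, θ t ≤ δ⁻¹ := by
    intro θ hθ t
    have hcon : ∀ j, 0 ≤ ∑ t ∈ (Iset n k net.κ).attach, cjAux net f j t.1 * θ t := by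
      intro j; simpa [cjAux] using hθ.2.1 j
    have expand : ∑ t ∈ (Iset n k net.κ).attach, gAux net f w ε t.1 * θ t
        = 1 - ∑ j, ε * ∑ t ∈ (Iset n k net.κ).attach, cjAux net f j t.1 * θ t := by
      have hterm : ∀ t' ∈ (Iset n k net.κ).attach, gAux net f w ε t'.1 * θ t'
          = w (AtI t'.1) * θ t' - ∑ j, ε * (cjAux net f j t'.1 * θ t') := by
        intro t' _
        simp only [gAux, sub_mul, Finset.sum_mul, mul_assoc]
      rw [Finset.sum_congr rfl hterm, Finset.sum_sub_distrib, hθ.2.2, Finset.sum_comm]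
      congr 1
      exact Finset.sum_congr rfl fun j _ => (Finset.mul_sum _ _ _).symm
    have hsum_le : ∑ t' ∈ (Iset n k net.κ).attach, gAux net f w ε t'.1 * θ t' ≤ 1 := by
      rw [expand]
      have : 0 ≤ ∑ j, ε * ∑ t ∈ (Iset n k net.κ).attach, cjAux net f j t.1 * θ t :=
        Finset.sum_nonneg fun j _ => mul_nonneg hεpos.le (hcon j)
      linarith
    have hterm_nonneg : ∀ t' ∈ (Iset n k net.κ).attach, 0 ≤ gAux net f w ε t'.1 * θ t' :=
      fun t' _ => mul_nonneg (hgpos t'.1 t'.2).le (hθ.1 t')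
    have h1 : gAux net f w ε t.1 * θ t ≤ 1 :=
      le_trans (Finset.single_le_sum hterm_nonneg (Finset.mem_attach _ t)) hsum_le
    have h2 : δ * θ t ≤ gAux net f w ε t.1 * θ t :=
      mul_le_mul_of_nonneg_right (hδle t.1 t.2) (hθ.1 t)
    have h4 : δ * δ⁻¹ = 1 := mul_inv_cancel₀ hδpos.ne'
    nlinarith
  -- closedness
  have hcont : ∀ c : Idx n k → ℝ,
      Continuous fun θ : {t : Idx n k // t ∈ Iset n k net.κ} → ℝ =>
        ∑ t ∈ (Iset n k net.κ).attach, c t.1 * θ t :=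
    fun c => continuous_finset_sum _ fun t _ => continuous_const.mul (continuous_apply t)
  have hclosed : IsClosed {θ | PrimalFeasible n k net w f θ} := by
    have heq : {θ | PrimalFeasible n k net w f θ} =
        (⋂ t, {θ : {t : Idx n k // t ∈ Iset n k net.κ} → ℝ | 0 ≤ θ t}) ∩
        ((⋂ j, {θ | 0 ≤ ∑ t ∈ (Iset n k net.κ).attach,
            ((aI t.1 j : ℝ) * f j (Atj net t.1 j) - (bI t.1 j : ℝ) * f j (Atj net t.1 j + 1)) * θ t}) ∩
          {θ | ∑ t ∈ (Iset n k net.κ).attach, w (AtI t.1) * θ t = 1}) := by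
      ext θ
      simp only [PrimalFeasible, Set.mem_setOf_eq, Set.mem_inter_iff, Set.mem_iInter]
    have c1 : IsClosed (⋂ t, {θ : {t : Idx n k // t ∈ Iset n k net.κ} → ℝ | 0 ≤ θ t}) :=
      isClosed_iInter fun t => isClosed_le continuous_const (continuous_apply t)
    have c2 : IsClosed (⋂ j : Fin k, {θ : {t : Idx n k // t ∈ Iset n k net.κ} → ℝ |
        0 ≤ ∑ t ∈ (Iset n k net.κ).attach,
          ((aI t.1 j : ℝ) * f j (Atj net t.1 j) - (bI t.1 j : ℝ) * f j (Atj net t.1 j + 1)) * θ t}) :=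
      isClosed_iInter fun j => isClosed_le continuous_const
        (hcont (fun t => (aI t j : ℝ) * f j (Atj net t j) - (bI t j : ℝ) * f j (Atj net t j + 1)))
    have c3 : IsClosed {θ : {t : Idx n k // t ∈ Iset n k net.κ} → ℝ |
        ∑ t ∈ (Iset n k net.κ).attach, w (AtI t.1) * θ t = 1} :=
      isClosed_eq (hcont (fun t => w (AtI t))) continuous_const
    rw [heq]
    exact c1.inter (c2.inter c3)
  have hsubset : {θ | PrimalFeasible n k net w f θ} ⊆
      Set.pi Set.univ (fun _ => Set.Icc (0:ℝ) δ⁻¹) := by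
    intro θ hθ t _
    exact ⟨hθ.1 t, key θ hθ t⟩
  have hcomp : IsCompact {θ | PrimalFeasible n k net w f θ} :=
    IsCompact.of_isClosed_subset (isCompact_univ_pi fun _ => isCompact_Icc) hclosed hsubset
  refine ⟨⟨θ₀, hfeas0⟩, hcomp, ?_⟩
  have hcontObj : Continuous (primalObj n k net.κ w) := by
    exact hcont (fun t => w (BtI t))
  obtain ⟨θm, hθm, hmax⟩ := hcomp.exists_isMaxOn ⟨θ₀, hfeas0⟩ hcontObj.continuousOn
  refine ⟨θm, hθm, fun θ hθ => hmax hθ, ?_⟩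
  apply IsGreatest.csSup_eq
  constructor
  · exact ⟨θm, hθm, rfl⟩
  · rintro x ⟨θ', hθ', rfl⟩
    exact hmax hθ'
end
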